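/- arXiv:2004.05996 — 5 statements merged into one kernel-verified Lean document; each statement's English description precedes it below -/
import Mathlib

section
/- For every positive integer α, every β ∈ ℂ with Re(β) > −1, every z ∈ ℂ, and every integer n ≥ 3, the generalized Laguerre polynomial satisfies the recurrence L_n^{(α,β)}(z) = −(z/n)·L_{n−1}^{(α,β)}(z) + Σ_{m=1}^{n} (−1)^{m−1} · (α(n−1)+β)_{(m−1)α} · C_{n,m} · L_{n−m}^{(α,β)}(z), where (α(n−1)+β)_{(m−1)α} = Γ(α(n−1)+β+1)/Γ(α(n−m)+β+1). -/
open Finset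

/-- The generalized Laguerre polynomial
`L_n^{(α,β)}(z) = (Γ(αn+β+1)/n!) Σ_{k=0}^{n} ((−n)^{(k)}/Γ(αk+β+1)) z^k/k!`. -/
noncomputable def genLaguerre (α : ℕ) (β : ℂ) (n : ℕ) (z : ℂ) : ℂ :=
  Complex.Gamma ((α : ℂ) * n + β + 1) / (n.factorial : ℂ) *
    ∑ k ∈ range (n + 1),
      (∏ i ∈ range k, (-(n : ℂ) + i)) / Complex.Gamma ((α : ℂ) * k + β + 1) *
        z ^ k / (k.factorial : ℂ)

/-- `C_{n,m}(α,β) = (1/(m!·n)) Σ_{j=0}^{m} (−1)^j binom(m,j)(n−j)·(α(n−j)+β)_α`,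
where `(γ)_r = γ(γ−1)⋯(γ−r+1)` is the falling factorial. -/
noncomputable def Cnm (α : ℕ) (β : ℂ) (n m : ℕ) : ℂ :=
  1 / ((m.factorial : ℂ) * n) *
    ∑ j ∈ range (m + 1), (-1 : ℂ) ^ j * (m.choose j : ℂ) * ((n : ℂ) - j) *
      ∏ i ∈ range α, ((α : ℂ) * ((n : ℂ) - j) + β - i)


namespace GLA

noncomputable def gG (α : ℕ) (β : ℂ) (q : ℕ) : ℂ := Complex.Gamma ((α : ℂ) * q + β + 1)

noncomputable def fP (α : ℕ) (β : ℂ) (x : ℂ) : ℂ := ∏ i ∈ range α, ((α : ℂ) * x + β - i)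

noncomputable def rr (q k : ℕ) : ℂ := ∏ i ∈ range k, (-(q : ℂ) + i)

noncomputable def BB (α : ℕ) (β : ℂ) (q k : ℕ) : ℂ :=
  gG α β q * rr q k / ((q.factorial : ℂ) * gG α β k * (k.factorial : ℂ))

noncomputable def ff (α : ℕ) (β : ℂ) (n j : ℕ) : ℂ :=
  ((n : ℂ) - j) * ∏ i ∈ range α, ((α : ℂ) * ((n : ℂ) - j) + β - i)

noncomputable def DD (α : ℕ) (β : ℂ) (n m : ℕ) : ℂ :=
  ∑ j ∈ range (m + 1), (-1 : ℂ) ^ j * (m.choose j : ℂ) * ff α β n j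

lemma gG_ne_zero {α : ℕ} {β : ℂ} (hβ : -1 < β.re) (q : ℕ) : gG α β q ≠ 0 := by
  apply Complex.Gamma_ne_zero_of_re_pos
  have h1 : (0:ℝ) ≤ (α:ℝ) * q := by positivity
  simp only [Complex.add_re, Complex.mul_re, Complex.natCast_re, Complex.natCast_im,
    Complex.one_re, Complex.one_im]
  nlinarith

lemma Gamma_add_nat (s : ℂ) (hs : 0 < s.re) (a : ℕ) :
    Complex.Gamma (s + a) = (∏ i ∈ range a, (s + i)) * Complex.Gamma s := by
  induction a with
  | zero => simp
  | succ a ih =>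
    have h2 : s + (a : ℂ) ≠ 0 := by
      intro h
      have : (s + (a : ℂ)).re = 0 := by rw [h]; simp
      simp only [Complex.add_re, Complex.natCast_re] at this
      have : (0:ℝ) ≤ (a:ℝ) := by positivity
      linarith
    have h1 : s + ((a + 1 : ℕ) : ℂ) = (s + a) + 1 := by push_cast; ring
    rw [h1, Complex.Gamma_add_one _ h2, ih, prod_range_succ]
    ring

lemma gG_succ {α : ℕ} {β : ℂ} (hβ : -1 < β.re) (q : ℕ) :
    gG α β (q + 1) = fP α β ((q + 1 : ℕ) : ℂ) * gG α β q := by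
  have hre : 0 < ((α : ℂ) * q + β + 1).re := by
    have h1 : (0:ℝ) ≤ (α:ℝ) * q := by positivity
    simp only [Complex.add_re, Complex.mul_re, Complex.natCast_re, Complex.natCast_im,
      Complex.one_re, Complex.one_im]
    nlinarith
  have h : (α : ℂ) * ((q + 1 : ℕ) : ℂ) + β + 1 = ((α : ℂ) * q + β + 1) + (α : ℕ) := by
    push_cast; ring
  rw [gG, h, Gamma_add_nat _ hre α, gG]
  congr 1
  rw [fP, ← Finset.prod_range_reflect (fun j => (α : ℂ) * q + β + 1 + j) α]
  refine Finset.prod_congr rfl fun i hi => ?_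
  have hi' : i < α := Finset.mem_range.1 hi
  have h1 : α - 1 - i = α - (1 + i) := by omega
  rw [h1, Nat.cast_sub (by omega : 1 + i ≤ α)]
  push_cast
  ring

lemma rr_zero {q k : ℕ} (h : q < k) : rr q k = 0 := by
  apply Finset.prod_eq_zero (Finset.mem_range.2 h)
  simp

lemma rr_fact {q k : ℕ} (h : k ≤ q) :
    rr q k * ((q - k).factorial : ℂ) = (-1) ^ k * (q.factorial : ℂ) := by
  have h1 : rr q k = (-1 : ℂ) ^ k * (q.descFactorial k : ℂ) := by
    calc rr q k = ∏ i ∈ range k, (-1 : ℂ) * ((q : ℂ) - i) :=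
          Finset.prod_congr rfl fun i _ => by ring
      _ = (-1 : ℂ) ^ k * ∏ i ∈ range k, ((q : ℂ) - i) := by
          rw [Finset.prod_mul_distrib, Finset.prod_const, Finset.card_range]
      _ = (-1 : ℂ) ^ k * (q.descFactorial k : ℂ) := by
          rw [Nat.descFactorial_eq_prod_range, Nat.cast_prod]
          congr 1
          refine Finset.prod_congr rfl fun i hi => ?_
          have : i ≤ q := le_trans (le_of_lt (Finset.mem_range.1 hi)) h
          rw [Nat.cast_sub this]
  rw [h1, mul_assoc, ← Nat.cast_mul, mul_comm (q.descFactorial k) _,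
    Nat.factorial_mul_descFactorial h]

lemma BB_zero {α : ℕ} {β : ℂ} {q k : ℕ} (h : q < k) : BB α β q k = 0 := by
  simp [BB, rr_zero h]

lemma BB_eq {α : ℕ} {β : ℂ} (hβ : -1 < β.re) {q k : ℕ} (h : k ≤ q) :
    BB α β q k = (-1 : ℂ) ^ k * gG α β q /
      (((q - k).factorial : ℂ) * gG α β k * (k.factorial : ℂ)) := by
  rw [BB]
  have h1 := rr_fact (q := q) (k := k) h
  have h2 : ((q - k).factorial : ℂ) ≠ 0 := Nat.cast_ne_zero.2 (Nat.factorial_ne_zero _)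
  have h3 : (k.factorial : ℂ) ≠ 0 := Nat.cast_ne_zero.2 (Nat.factorial_ne_zero _)
  have h4 : (q.factorial : ℂ) ≠ 0 := Nat.cast_ne_zero.2 (Nat.factorial_ne_zero _)
  have h5 := gG_ne_zero (α := α) hβ k
  rw [div_eq_div_iff (by simp [h3, h4, h5]) (by simp [h2, h3, h5])]
  linear_combination (gG α β q * gG α β k * (k.factorial : ℂ)) * h1

lemma newton (f : ℕ → ℂ) (N : ℕ) :
    ∑ m ∈ range (N + 1), (-1 : ℂ) ^ m * (N.choose m : ℂ) *
      ∑ j ∈ range (m + 1), (-1 : ℂ) ^ j * (m.choose j : ℂ) * f j = f N := by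
  have h1 : ∀ m ∈ range (N + 1),
      (-1 : ℂ) ^ m * (N.choose m : ℂ) *
        ∑ j ∈ range (m + 1), (-1 : ℂ) ^ j * (m.choose j : ℂ) * f j
      = ∑ j ∈ range (N + 1),
          (-1 : ℂ) ^ m * (N.choose m : ℂ) * ((-1 : ℂ) ^ j * (m.choose j : ℂ) * f j) := by
    intro m hm
    rw [Finset.mul_sum]
    apply Finset.sum_subset (Finset.range_subset_range.2 (Finset.mem_range.1 hm))
    intro j _ hj'
    have hmj : m < j := by simpa using hj'
    simp [Nat.choose_eq_zero_of_lt hmj]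
  rw [Finset.sum_congr rfl h1, Finset.sum_comm]
  have key : ∀ j ∈ range (N + 1),
      (∑ m ∈ range (N + 1),
        (-1 : ℂ) ^ m * (N.choose m : ℂ) * ((-1 : ℂ) ^ j * (m.choose j : ℂ) * f j))
      = if j = N then f N else 0 := by
    intro j hj
    have hjN : j ≤ N := Nat.lt_succ_iff.1 (Finset.mem_range.1 hj)
    rw [← Finset.sum_subset
        (show Finset.Icc j N ⊆ range (N + 1) from fun x hx =>
          Finset.mem_range.2 (by have := Finset.mem_Icc.1 hx; omega)) ?_]
    · rw [← Finset.Ico_add_one_right_eq_Icc, Finset.sum_Ico_eq_sum_range]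
      have h2 : ∀ t ∈ range (N + 1 - j),
          (-1 : ℂ) ^ (j + t) * (N.choose (j + t) : ℂ) *
            ((-1 : ℂ) ^ j * ((j + t).choose j : ℂ) * f j)
          = (N.choose j : ℂ) * f j * ((-1 : ℂ) ^ t * ((N - j).choose t : ℂ)) := by
        intro t ht
        have htj : j + t ≤ N := by
          have := Finset.mem_range.1 ht; omega
        have hc : N.choose (j + t) * (j + t).choose j = N.choose j * (N - j).choose t := by
          rw [Nat.choose_mul (n := N) (Nat.le_add_right j t)]
          congr 2
          omega
        have hs : (-1 : ℂ) ^ (j + t) * (-1 : ℂ) ^ j = (-1 : ℂ) ^ t := by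
          rw [← pow_add, show j + t + j = 2 * j + t from by omega, pow_add, pow_mul]
          norm_num
        calc (-1 : ℂ) ^ (j + t) * (N.choose (j + t) : ℂ) *
              ((-1 : ℂ) ^ j * ((j + t).choose j : ℂ) * f j)
            = ((-1 : ℂ) ^ (j + t) * (-1 : ℂ) ^ j) *
                ((N.choose (j + t) * (j + t).choose j : ℕ) : ℂ) * f j := by
              push_cast; ring
          _ = (N.choose j : ℂ) * f j * ((-1 : ℂ) ^ t * ((N - j).choose t : ℂ)) := by
              rw [hs, hc]; push_cast; ring
      rw [Finset.sum_congr rfl h2, ← Finset.mul_sum]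
      have h3 : ∑ t ∈ range (N + 1 - j), (-1 : ℂ) ^ t * ((N - j).choose t : ℂ)
          = if N - j = 0 then 1 else 0 := by
        have h4 := Int.alternating_sum_range_choose (n := N - j)
        rw [show N + 1 - j = N - j + 1 from by omega]
        exact_mod_cast congrArg (fun x : ℤ => (x : ℂ)) h4
      rw [h3]
      rcases eq_or_lt_of_le hjN with h | h
      · subst h; simp
      · rw [if_neg (by omega), if_neg (by omega), mul_zero]
    · intro m hm hm'
      have : m < j := by
        simp only [Finset.mem_Icc, Finset.mem_range] at hm hm'
        omega
      simp [Nat.choose_eq_zero_of_lt this]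
  rw [Finset.sum_congr rfl key]
  simp

lemma lag (α : ℕ) (β : ℂ) (q : ℕ) (z : ℂ) :
    genLaguerre α β q z = ∑ k ∈ range (q + 1), BB α β q k * z ^ k := by
  rw [genLaguerre, Finset.mul_sum]
  refine Finset.sum_congr rfl fun k _ => ?_
  rw [BB, gG, gG, rr]
  ring

lemma lag' (α : ℕ) (β : ℂ) {q n : ℕ} (h : q ≤ n) (z : ℂ) :
    genLaguerre α β q z = ∑ k ∈ range (n + 1), BB α β q k * z ^ k := by
  rw [lag]
  apply Finset.sum_subset (Finset.range_subset_range.2 (by omega))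
  intro k _ hk
  have : q < k := by simpa using hk
  simp [BB_zero this]

lemma Cnm_eq (α : ℕ) (β : ℂ) (n m : ℕ) :
    Cnm α β n m = DD α β n m / ((m.factorial : ℂ) * n) := by
  rw [Cnm, show (∑ j ∈ range (m + 1), (-1 : ℂ) ^ j * (m.choose j : ℂ) * ((n : ℂ) - j) *
      ∏ i ∈ range α, ((α : ℂ) * ((n : ℂ) - j) + β - i)) = DD α β n m from by
    rw [DD]; exact Finset.sum_congr rfl fun j _ => by rw [ff]; ring]
  rw [one_div, inv_mul_eq_div]

lemma DD_zero (α : ℕ) (β : ℂ) (n : ℕ) : DD α β n 0 = ff α β n 0 := by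
  simp [DD]

lemma coeff_id (α : ℕ) {β : ℂ} (hβ : -1 < β.re) {n k : ℕ} (hn : 0 < n) (hk : k ≤ n) :
    BB α β n k = (if k = 0 then 0 else -(1 / (n : ℂ)) * BB α β (n - 1) (k - 1))
      + ∑ m ∈ Icc 1 n, (-1 : ℂ) ^ (m - 1) * (gG α β (n - 1) / gG α β (n - m)) *
          Cnm α β n m * BB α β (n - m) k := by
  have hgnz : ∀ q : ℕ, gG α β q ≠ 0 := gG_ne_zero hβ
  have hnz : (n : ℂ) ≠ 0 := Nat.cast_ne_zero.2 (by omega)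
  have hfz : ∀ q : ℕ, (q.factorial : ℂ) ≠ 0 := fun q => Nat.cast_ne_zero.2 (Nat.factorial_ne_zero _)
  set W : ℂ := gG α β (n - 1) * (-1) ^ k /
    (gG α β k * (k.factorial : ℂ) * ((n - k).factorial : ℂ) * n) with hW
  have hgn : gG α β n = fP α β ((n : ℕ) : ℂ) * gG α β (n - 1) := by
    have := gG_succ (α := α) hβ (n - 1)
    rwa [show n - 1 + 1 = n from by omega] at this
  have hff0 : ff α β n 0 = (n : ℂ) * fP α β ((n : ℕ) : ℂ) := by
    simp [ff, fP]
  have hffN : ff α β n (n - k) = (k : ℂ) * fP α β ((k : ℕ) : ℂ) := by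
    have e : (n : ℂ) - ((n : ℂ) - (k : ℂ)) = (k : ℂ) := by ring
    rw [ff, fP, Nat.cast_sub hk, e]
  have hA : BB α β n k = W * ff α β n 0 := by
    rw [BB_eq hβ hk, hgn, hff0, hW]
    field_simp [hgnz, hfz, hnz]
  have hB : (if k = 0 then 0 else -(1 / (n : ℂ)) * BB α β (n - 1) (k - 1))
      = W * ff α β n (n - k) := by
    rcases Nat.eq_zero_or_pos k with h0 | h0
    · subst h0
      rw [if_pos rfl, ff]
      simp [Nat.cast_sub hk]
    · rw [if_neg (by omega), hffN]
      have hk1 : k - 1 ≤ n - 1 := by omega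
      have hknz : (k : ℂ) ≠ 0 := Nat.cast_ne_zero.2 (by omega)
      have hgk : gG α β k = fP α β ((k : ℕ) : ℂ) * gG α β (k - 1) := by
        have := gG_succ (α := α) hβ (k - 1)
        rwa [show k - 1 + 1 = k from by omega] at this
      have hfPk : fP α β ((k : ℕ) : ℂ) ≠ 0 := by
        intro h
        exact hgnz k (by rw [hgk, h, zero_mul])
      have hkf : (k.factorial : ℂ) = (k : ℂ) * ((k - 1).factorial : ℂ) := by
        rw [← Nat.cast_mul]
        congr 1
        rw [← Nat.succ_pred_eq_of_pos h0, Nat.factorial_succ]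
        simp
      have hsgn : (-1 : ℂ) ^ k = -1 * (-1 : ℂ) ^ (k - 1) := by
        rw [← pow_succ', show k - 1 + 1 = k from by omega]
      rw [BB_eq hβ hk1, show n - 1 - (k - 1) = n - k from by omega, hW, hsgn, hgk, hkf]
      simp only [neg_mul, ← neg_div, div_div, neg_inj, ← mul_div_assoc, div_mul_div_comm,
        div_mul_eq_mul_div, one_mul, mul_one]
      rw [div_eq_div_iff (by simp [hgnz, hfz, hnz]) (by simp [hgnz, hfz, hnz, hknz, hfPk])]
      ring_nf
  have hC : ∑ m ∈ Icc 1 n, (-1 : ℂ) ^ (m - 1) * (gG α β (n - 1) / gG α β (n - m)) *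
        Cnm α β n m * BB α β (n - m) k
      = W * (ff α β n 0 - ff α β n (n - k)) := by
    rw [← Finset.sum_subset (Finset.Icc_subset_Icc_right (by omega : n - k ≤ n)) ?_]
    · have hterm : ∀ m ∈ Icc 1 (n - k),
          (-1 : ℂ) ^ (m - 1) * (gG α β (n - 1) / gG α β (n - m)) *
            Cnm α β n m * BB α β (n - m) k
          = -W * ((-1 : ℂ) ^ m * ((n - k).choose m : ℂ) * DD α β n m) := by
        intro m hm
        obtain ⟨hm1, hm2⟩ := Finset.mem_Icc.1 hm
        have hkm : k ≤ n - m := by omega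
        rw [Cnm_eq, BB_eq hβ hkm, show n - m - k = n - k - m from by omega]
        have hsgn : (-1 : ℂ) ^ (m - 1) = -(-1 : ℂ) ^ m := by
          rw [show m = m - 1 + 1 from by omega, pow_succ]
          rw [show m - 1 + 1 - 1 = m - 1 from by omega]
          ring
        have hcf : ((n - k).factorial : ℂ)
            = (((n - k).choose m : ℕ) : ℂ) * (m.factorial : ℂ) * (((n - k - m).factorial : ℕ) : ℂ) := by
          rw [← Nat.cast_mul, ← Nat.cast_mul, Nat.choose_mul_factorial_mul_factorial hm2]
        have hch : (((n - k).choose m : ℕ) : ℂ) ≠ 0 :=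
          Nat.cast_ne_zero.2 (Nat.choose_pos hm2).ne'
        rw [hsgn, hW, hcf]
        simp only [neg_mul, ← neg_div, div_div, neg_inj, ← mul_div_assoc, div_mul_div_comm,
          div_mul_eq_mul_div, one_mul, mul_one]
        rw [div_eq_div_iff (by simp [hgnz, hfz, hnz]) (by simp [hgnz, hfz, hnz, hch])]
        ring_nf
      rw [Finset.sum_congr rfl hterm]
      have hsum : ∑ m ∈ Icc 1 (n - k),
          -W * ((-1 : ℂ) ^ m * ((n - k).choose m : ℂ) * DD α β n m)
          = -W * ∑ m ∈ Icc 1 (n - k), (-1 : ℂ) ^ m * ((n - k).choose m : ℂ) * DD α β n m := by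
        rw [Finset.mul_sum]
      rw [hsum]
      have hnewt : ∑ m ∈ range (n - k + 1), (-1 : ℂ) ^ m * ((n - k).choose m : ℂ) * DD α β n m
          = ff α β n (n - k) := by
        have := newton (ff α β n) (n - k)
        rw [← this]
        exact Finset.sum_congr rfl fun m _ => by rw [DD]
      have hIcc : ∑ m ∈ Icc 1 (n - k), (-1 : ℂ) ^ m * ((n - k).choose m : ℂ) * DD α β n m
          = ff α β n (n - k) - ff α β n 0 := by
        have hsplit : ∑ m ∈ range (n - k + 1), (-1 : ℂ) ^ m * ((n - k).choose m : ℂ) * DD α β n m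
            = (∑ m ∈ Icc 1 (n - k), (-1 : ℂ) ^ m * ((n - k).choose m : ℂ) * DD α β n m)
              + (-1 : ℂ) ^ 0 * ((n - k).choose 0 : ℂ) * DD α β n 0 := by
          rw [Finset.sum_range_succ']
          congr 1
          rw [← Finset.Ico_add_one_right_eq_Icc, Finset.sum_Ico_eq_sum_range, Nat.add_sub_cancel]
          exact Finset.sum_congr rfl fun i _ => by rw [Nat.add_comm]
        have h0 : (-1 : ℂ) ^ 0 * ((n - k).choose 0 : ℂ) * DD α β n 0 = ff α β n 0 := by
          simp [DD_zero]
        rw [hsplit, h0] at hnewt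
        linear_combination hnewt
      rw [hIcc]
      ring
    · intro m hm hm'
      have h1 : n - m < k := by
        simp only [Finset.mem_Icc] at hm hm'
        omega
      simp [BB_zero h1]
  rw [hA, hB, hC]
  ring

end GLA

/-- Recurrence relation for the generalized Laguerre polynomials, with the falling
factorial `(α(n−1)+β)_{(m−1)α} = Γ(α(n−1)+β+1)/Γ(α(n−m)+β+1)`. -/
theorem genLaguerre_recurrence (α : ℕ) (hα : 0 < α) (β : ℂ) (hβ : -1 < β.re)
    (z : ℂ) (n : ℕ) (hn : 3 ≤ n) :
    genLaguerre α β n z =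
      -(z / (n : ℂ)) * genLaguerre α β (n - 1) z +
        ∑ m ∈ Icc 1 n, (-1 : ℂ) ^ (m - 1) *
          (Complex.Gamma ((α : ℂ) * ((n : ℂ) - 1) + β + 1) /
            Complex.Gamma (((α * (n - m) : ℕ) : ℂ) + β + 1)) *
          Cnm α β n m * genLaguerre α β (n - m) z := by
  classical
  have hg1 : Complex.Gamma ((α : ℂ) * ((n : ℂ) - 1) + β + 1) = GLA.gG α β (n - 1) := by
    rw [GLA.gG]
    congr 1
    rw [Nat.cast_sub (by omega : 1 ≤ n)]
    push_cast
    ring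
  have hg2 : ∀ m, Complex.Gamma (((α * (n - m) : ℕ) : ℂ) + β + 1) = GLA.gG α β (n - m) := by
    intro m
    rw [GLA.gG]
    congr 1
    push_cast
    ring
  set cc : ℕ → ℂ := fun k => if k = 0 then 0 else -(1 / (n : ℂ)) * GLA.BB α β (n - 1) (k - 1)
    with hcc
  have hL1 : genLaguerre α β (n - 1) z = ∑ k ∈ range n, GLA.BB α β (n - 1) k * z ^ k := by
    rw [GLA.lag, show n - 1 + 1 = n from by omega]
  have hfirst : -(z / (n : ℂ)) * genLaguerre α β (n - 1) z
      = ∑ k ∈ range (n + 1), cc k * z ^ k := by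
    rw [hL1, Finset.mul_sum, Finset.sum_range_succ' (fun k => cc k * z ^ k) n]
    have h0 : cc 0 * z ^ 0 = 0 := by simp [hcc]
    rw [h0, add_zero]
    refine Finset.sum_congr rfl fun i _ => ?_
    have h1 : cc (i + 1) = -(1 / (n : ℂ)) * GLA.BB α β (n - 1) i := by simp [hcc]
    rw [h1]
    ring
  have hsecond : ∑ m ∈ Icc 1 n, (-1 : ℂ) ^ (m - 1) *
        (Complex.Gamma ((α : ℂ) * ((n : ℂ) - 1) + β + 1) /
          Complex.Gamma (((α * (n - m) : ℕ) : ℂ) + β + 1)) *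
        Cnm α β n m * genLaguerre α β (n - m) z
      = ∑ k ∈ range (n + 1), (∑ m ∈ Icc 1 n, (-1 : ℂ) ^ (m - 1) *
          (GLA.gG α β (n - 1) / GLA.gG α β (n - m)) * Cnm α β n m *
          GLA.BB α β (n - m) k) * z ^ k := by
    have step1 : ∀ m ∈ Icc 1 n, (-1 : ℂ) ^ (m - 1) *
          (Complex.Gamma ((α : ℂ) * ((n : ℂ) - 1) + β + 1) /
            Complex.Gamma (((α * (n - m) : ℕ) : ℂ) + β + 1)) *
          Cnm α β n m * genLaguerre α β (n - m) z
        = ∑ k ∈ range (n + 1), (-1 : ℂ) ^ (m - 1) *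
            (GLA.gG α β (n - 1) / GLA.gG α β (n - m)) * Cnm α β n m *
            GLA.BB α β (n - m) k * z ^ k := by
      intro m hm
      rw [hg1, hg2 m, GLA.lag' α β (by omega : n - m ≤ n) z, Finset.mul_sum]
      exact Finset.sum_congr rfl fun k _ => by ring
    rw [Finset.sum_congr rfl step1, Finset.sum_comm]
    exact Finset.sum_congr rfl fun k _ => by rw [Finset.sum_mul]
  rw [hfirst, hsecond, GLA.lag α β n z, ← Finset.sum_add_distrib]
  refine Finset.sum_congr rfl fun k hk => ?_
  have hk' : k ≤ n := by
    have := Finset.mem_range.1 hk; omega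
  have := GLA.coeff_id α hβ (by omega : 0 < n) hk'
  calc GLA.BB α β n k * z ^ k
      = (cc k + ∑ m ∈ Icc 1 n, (-1 : ℂ) ^ (m - 1) *
          (GLA.gG α β (n - 1) / GLA.gG α β (n - m)) * Cnm α β n m *
          GLA.BB α β (n - m) k) * z ^ k := by rw [hcc, ← this]
    _ = cc k * z ^ k + (∑ m ∈ Icc 1 n, (-1 : ℂ) ^ (m - 1) *
          (GLA.gG α β (n - 1) / GLA.gG α β (n - m)) * Cnm α β n m *
          GLA.BB α β (n - m) k) * z ^ k := by ring
end

section
/- Let β ∈ ℂ with Re(β) > −1 and let α = 1. Then for every integer n ≥ 1: C_{n,1}(1,β) = (2n−1+β)/n; for every integer n ≥ 2: the coefficient B_{n,2} := (n−1+β)_1·C_{n,2}(1,β) equals (n−1+β)/n, equivalently C_{n,2}(1,β) = 1/n; and for all integers m, n with n ≥ m ≥ 3: C_{n,m}(1,β) = 0. -/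
open Finset

/-- `B_{n,m} = (α(n−1)+β)_{(m−1)α} · C_{n,m}`. -/
noncomputable def Bnm (α : ℕ) (β : ℂ) (n m : ℕ) : ℂ :=
  (∏ i ∈ range ((m - 1) * α), ((α : ℂ) * ((n : ℂ) - 1) + β - i)) * Cnm α β n m

lemma S0' (m : ℕ) (hm : m ≠ 0) : ∑ j ∈ range (m+1), (-1:ℂ)^j * (m.choose j : ℂ) = 0 := by
  have h := Int.alternating_sum_range_choose_of_ne hm
  have h2 := congrArg (fun z : ℤ => (z : ℂ)) h
  push_cast at h2
  simpa using h2

lemma S1' (m : ℕ) (hm : 2 ≤ m) :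
    ∑ j ∈ range (m+1), (-1:ℂ)^j * (m.choose j : ℂ) * (j : ℂ) = 0 := by
  obtain ⟨k, rfl⟩ : ∃ k, m = k + 1 := ⟨m - 1, by omega⟩
  rw [Finset.sum_range_succ']
  have key : ∀ j : ℕ, (-1:ℂ)^(j+1) * (((k+1).choose (j+1) : ℕ) : ℂ) * ((j+1 : ℕ) : ℂ)
      = (-(k:ℂ)-1) * ((-1:ℂ)^j * (k.choose j : ℂ)) := by
    intro j
    have h' : (((k+1) * k.choose j : ℕ) : ℂ) = (((k+1).choose (j+1) * (j+1) : ℕ) : ℂ) := by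
      exact_mod_cast congrArg (Nat.cast : ℕ → ℂ) (Nat.add_one_mul_choose_eq k j)
    push_cast at h' ⊢
    linear_combination (-1:ℂ)^j * h'
  rw [Finset.sum_congr rfl fun j _ => key j, ← Finset.mul_sum, S0' k (by omega)]
  simp

lemma S2' (m : ℕ) (hm : 3 ≤ m) :
    ∑ j ∈ range (m+1), (-1:ℂ)^j * (m.choose j : ℂ) * ((j : ℂ) * ((j:ℂ) - 1)) = 0 := by
  obtain ⟨k, rfl⟩ : ∃ k, m = k + 2 := ⟨m - 2, by omega⟩
  rw [Finset.sum_range_succ', Finset.sum_range_succ']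
  have key : ∀ j : ℕ, (-1:ℂ)^(j+1+1) * (((k+2).choose (j+1+1) : ℕ) : ℂ) *
        (((j+1+1 : ℕ) : ℂ) * (((j+1+1 : ℕ) : ℂ) - 1))
      = ((k:ℂ)+2) * ((k:ℂ)+1) * ((-1:ℂ)^j * (k.choose j : ℂ)) := by
    intro j
    have h1 : (((k+2) * (k+1).choose (j+1) : ℕ) : ℂ)
        = (((k+2).choose (j+2) * (j+2) : ℕ) : ℂ) := by
      exact_mod_cast congrArg (Nat.cast : ℕ → ℂ) (Nat.add_one_mul_choose_eq (k+1) (j+1))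
    have h2 : (((k+1) * k.choose j : ℕ) : ℂ)
        = (((k+1).choose (j+1) * (j+1) : ℕ) : ℂ) := by
      exact_mod_cast congrArg (Nat.cast : ℕ → ℂ) (Nat.add_one_mul_choose_eq k j)
    push_cast at h1 h2 ⊢
    linear_combination (-((-1:ℂ)^j) * ((j:ℂ)+1)) * h1 - (-1:ℂ)^j * ((k:ℂ)+2) * h2
  rw [Finset.sum_congr rfl fun j _ => key j, ← Finset.mul_sum, S0' k (by omega)]
  simp

/-- For `α = 1`: `C_{n,1} = (2n−1+β)/n`, `B_{n,2} = (n−1+β)/n` (equivalently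
`C_{n,2} = 1/n`), and `C_{n,m} = 0` for `m ≥ 3`. -/
theorem Cnm_alpha_one (β : ℂ) (hβ : -1 < β.re) :
    (∀ n : ℕ, 1 ≤ n → Cnm 1 β n 1 = (2 * (n : ℂ) - 1 + β) / n) ∧
    (∀ n : ℕ, 2 ≤ n →
      Bnm 1 β n 2 = ((n : ℂ) - 1 + β) / n ∧ Cnm 1 β n 2 = 1 / (n : ℂ)) ∧
    (∀ m n : ℕ, 3 ≤ m → m ≤ n → Cnm 1 β n m = 0) := by
  refine ⟨?_, ?_, ?_⟩
  · intro n hn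
    have hn0 : (n:ℂ) ≠ 0 := Nat.cast_ne_zero.mpr (by omega)
    rw [Cnm]
    simp only [Finset.sum_range_succ, Finset.sum_range_zero, Finset.prod_range_one,
      Nat.choose_zero_right, Nat.choose_self, Nat.choose_one_right]
    push_cast
    field_simp
    ring
  · intro n hn
    have hn0 : (n:ℂ) ≠ 0 := Nat.cast_ne_zero.mpr (by omega)
    have hC : Cnm 1 β n 2 = 1 / (n : ℂ) := by
      rw [Cnm]
      simp only [Finset.sum_range_succ, Finset.sum_range_zero, Finset.prod_range_one,
      Nat.choose_zero_right, Nat.choose_self, Nat.choose_one_right]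
      push_cast
      field_simp
      ring
    refine ⟨?_, hC⟩
    rw [Bnm, hC]
    norm_num
    rw [div_eq_mul_inv]
  · intro m n hm hmn
    have hsum : ∑ j ∈ range (m + 1), (-1 : ℂ) ^ j * (m.choose j : ℂ) * ((n : ℂ) - j) *
        ∏ i ∈ range 1, (((1:ℕ) : ℂ) * ((n : ℂ) - j) + β - i) = 0 := by
      have expand : ∀ j ∈ range (m+1), (-1 : ℂ) ^ j * (m.choose j : ℂ) * ((n : ℂ) - j) *
          (∏ i ∈ range 1, (((1:ℕ) : ℂ) * ((n : ℂ) - j) + β - i))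
          = ((n:ℂ)*((n:ℂ)+β)) * ((-1:ℂ)^j * (m.choose j : ℂ))
            + (1 - 2*(n:ℂ) - β) * ((-1:ℂ)^j * (m.choose j : ℂ) * (j:ℂ))
            + (-1:ℂ)^j * (m.choose j : ℂ) * ((j:ℂ) * ((j:ℂ)-1)) := by
        intro j _
        rw [Finset.prod_range_one]
        push_cast
        ring
      rw [Finset.sum_congr rfl expand, Finset.sum_add_distrib, Finset.sum_add_distrib,
        ← Finset.mul_sum, ← Finset.mul_sum,
        S0' m (by omega), S1' m (by omega), S2' m (by omega)]
      ring
    rw [Cnm, hsum, mul_zero]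
end

section
/- Let α be a positive integer, β ∈ ℂ with Re(β) > −1, z ∈ ℂ, and n ≥ 1 an integer. Define the n×n complex matrix M by: M_{i,i} = B_{n+1−i,1} − z/(n+1−i) for 1 ≤ i ≤ n (diagonal); M_{i,i+1} = 1 for 1 ≤ i ≤ n−1 (superdiagonal); M_{i,j} = B_{n+1−j, i−j+1} for 1 ≤ j < i ≤ n (below the diagonal); and M_{i,j} = 0 for j > i+1. Then L_n^{(α,β)}(z) = det M. -/
open Finset

/-! ### Part A: Hessenberg determinant recurrence -/

noncomputable def hessM (g : ℕ → ℕ → ℂ) (n : ℕ) : Matrix (Fin n) (Fin n) ℂ :=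
  Matrix.of fun i j => if (j : ℕ) = (i : ℕ) + 1 then (1 : ℂ)
    else if (i : ℕ) + 1 < (j : ℕ) then 0
    else g (n - (j : ℕ)) ((i : ℕ) - (j : ℕ))

lemma coe_succAbove (n : ℕ) (i : Fin (n+1)) (r : Fin n) :
    ((i.succAbove r : Fin (n+1)) : ℕ) = if (r : ℕ) < (i : ℕ) then (r : ℕ) else (r : ℕ) + 1 := by
  rcases lt_or_ge (r : ℕ) (i : ℕ) with h | h
  · rw [Fin.succAbove_of_castSucc_lt _ _ (by simpa [Fin.lt_def] using h)]
    simp [h]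
  · rw [Fin.succAbove_of_le_castSucc _ _ (by simpa [Fin.le_def] using h)]
    simp [Nat.not_lt.2 h]

lemma hess_minor (g : ℕ → ℕ → ℂ) (n : ℕ) (i : Fin (n+1)) :
    ((hessM g (n+1)).submatrix i.succAbove Fin.succ).det = (hessM g (n - (i : ℕ))).det := by
  set k := (i : ℕ) with hk
  have hkn : k ≤ n := Nat.lt_succ_iff.mp i.isLt
  let e : Fin k ⊕ Fin (n - k) ≃ Fin n := finSumFinEquiv.trans (finCongr (by omega))
  rw [← Matrix.det_submatrix_equiv_self e]
  have hl : ∀ r : Fin k, ((e (Sum.inl r) : Fin n) : ℕ) = (r : ℕ) := by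
    intro r; simp [e]
  have hr : ∀ r : Fin (n - k), ((e (Sum.inr r) : Fin n) : ℕ) = k + (r : ℕ) := by
    intro r; simp [e]
  let A : Matrix (Fin k) (Fin k) ℂ := Matrix.of fun r c =>
    if (c : ℕ) = (r : ℕ) then (1 : ℂ)
    else if (r : ℕ) < (c : ℕ) then 0
    else g (n - (c : ℕ)) ((r : ℕ) - (c : ℕ) - 1)
  let C : Matrix (Fin (n - k)) (Fin k) ℂ := Matrix.of fun r c =>
    g (n - (c : ℕ)) (k + (r : ℕ) - (c : ℕ))
  have h1 : ∀ r : Fin k, ((i.succAbove (e (Sum.inl r)) : Fin (n+1)) : ℕ) = (r : ℕ) := by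
    intro r
    rw [coe_succAbove, hl, if_pos (hk ▸ r.isLt)]
  have h2 : ∀ r : Fin (n - k), ((i.succAbove (e (Sum.inr r)) : Fin (n+1)) : ℕ) = k + (r : ℕ) + 1 := by
    intro r
    rw [coe_succAbove, hr, if_neg (by omega)]
  have hg : ∀ a a' b b' : ℕ, a = a' → b = b' → g a b = g a' b' :=
    fun a a' b b' u v => by rw [u, v]
  have key : (((hessM g (n+1)).submatrix i.succAbove Fin.succ).submatrix e e) =
      Matrix.fromBlocks A 0 C (hessM g (n - k)) := by
    ext rc cc
    rcases rc with r | r <;> rcases cc with c | c <;>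
      (have hrv := r.isLt; have hcv := c.isLt
       simp only [Matrix.submatrix_apply, Matrix.fromBlocks_apply₁₁, Matrix.fromBlocks_apply₁₂,
         Matrix.fromBlocks_apply₂₁, Matrix.fromBlocks_apply₂₂, hessM, Matrix.of_apply,
         Matrix.zero_apply, A, C, Fin.val_succ, hl, hr, h1, h2]
       split_ifs <;> first | rfl | omega | (apply hg <;> omega))
  rw [key, Matrix.det_fromBlocks_zero₁₂]
  have hA : A.det = 1 := by
    rw [Matrix.det_of_lowerTriangular A (by
      intro x y h
      have hxy : (x : ℕ) < (y : ℕ) := h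
      simp only [A, Matrix.of_apply, if_neg (by omega : ¬ (y : ℕ) = (x : ℕ)), if_pos hxy])]
    simp [A]
  rw [hA, one_mul]

lemma hessM_det_eq (g : ℕ → ℕ → ℂ) (L : ℕ → ℂ) (hL0 : L 0 = 1)
    (hrec : ∀ m : ℕ, L (m + 1) = ∑ i ∈ range (m + 1), (-1 : ℂ) ^ i * g (m + 1) i * L (m - i)) :
    ∀ n, (hessM g n).det = L n := by
  intro n
  induction n using Nat.strong_induction_on with
  | _ n ih =>
    match n with
    | 0 => rw [hL0]; exact Matrix.det_fin_zero
    | (m + 1) =>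
      rw [Matrix.det_succ_column_zero, hrec m, ← Fin.sum_univ_eq_sum_range]
      refine Finset.sum_congr rfl fun i _ => ?_
      rw [hess_minor, ih (m - (i : ℕ)) (by omega)]
      simp [hessM]

/-! ### Part B: Gamma function lemmas -/

section B
variable (α : ℕ) (β : ℂ)

noncomputable def Γg (j : ℕ) : ℂ := Complex.Gamma ((α : ℂ) * j + β + 1)

noncomputable def fp (x : ℂ) : ℂ := ∏ i ∈ range α, ((α : ℂ) * x + β - i)

noncomputable def cc (p k : ℕ) : ℂ :=
  (-1) ^ k * Γg α β p / (((p - k).factorial : ℂ) * (k.factorial : ℂ) * Γg α β k)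

lemma Γg_re_pos (hβ : -1 < β.re) (j : ℕ) : 0 < ((α : ℂ) * j + β + 1).re := by
  have h : ((α : ℂ) * j + β + 1).re = (α : ℝ) * j + β.re + 1 := by simp
  rw [h]
  have : (0:ℝ) ≤ (α : ℝ) * j := by positivity
  linarith

lemma Γg_ne_zero (hβ : -1 < β.re) (j : ℕ) : Γg α β j ≠ 0 :=
  Complex.Gamma_ne_zero_of_re_pos (Γg_re_pos α β hβ j)

lemma Gamma_add_nat (r : ℕ) (s : ℂ) (hs : 0 < s.re) :
    Complex.Gamma (s + r) = Complex.Gamma s * ∏ i ∈ range r, (s + i) := by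
  induction r with
  | zero => simp
  | succ r ihr =>
    have hne : s + r ≠ 0 := by
      intro h
      have h2 : (s + (r:ℂ)).re = 0 := by rw [h]; simp
      simp only [Complex.add_re, Complex.natCast_re] at h2
      have : (0:ℝ) ≤ (r:ℝ) := by positivity
      linarith
    have h3 : s + (r + 1 : ℕ) = (s + r) + 1 := by push_cast; ring
    rw [h3, Complex.Gamma_add_one _ hne, ihr, prod_range_succ]
    ring

lemma Γg_succ (hβ : -1 < β.re) (j : ℕ) :
    Γg α β (j + 1) = Γg α β j * fp α β ((j : ℂ) + 1) := by
  have h1 : ((α : ℂ) * (j + 1 : ℕ) + β + 1) = ((α : ℂ) * j + β + 1) + (α : ℕ) := by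
    push_cast; ring
  rw [Γg, h1, Gamma_add_nat _ _ (Γg_re_pos α β hβ j), ← Γg]
  congr 1
  rw [fp, ← prod_range_reflect (fun i => (α : ℂ) * ((j : ℂ) + 1) + β - (i : ℕ)) α]
  refine prod_congr rfl fun i hi => ?_
  rw [mem_range] at hi
  have h4 : α - 1 - i = α - (1 + i) := by omega
  have h5 : ((α - (1 + i) : ℕ) : ℂ) = (α : ℂ) - (1 + i) := by
    rw [Nat.cast_sub (by omega)]; push_cast; ring
  simp only [h4, h5]
  ring

lemma fact_ne (m : ℕ) : ((m.factorial : ℕ) : ℂ) ≠ 0 := by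
  exact_mod_cast m.factorial_ne_zero

lemma prod_telescope (hβ : -1 < β.re) :
    ∀ r q : ℕ, r ≤ q →
      (∏ i ∈ range (r * α), ((α : ℂ) * q + β - i)) * Γg α β (q - r) = Γg α β q := by
  intro r
  induction r with
  | zero => intro q _; simp
  | succ r ihr =>
    intro q hq
    have h1 : (r + 1) * α = r * α + α := by ring
    rw [h1, prod_range_add]
    have h2 : ∀ j ∈ range α, (α : ℂ) * q + β - (r * α + j : ℕ) =
        (α : ℂ) * (((q - r - 1 : ℕ) : ℂ) + 1) + β - j := by
      intro j hj
      have : ((q - r - 1 : ℕ) : ℂ) = (q : ℂ) - r - 1 := by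
        have : q - r - 1 = q - (r + 1) := by omega
        rw [this, Nat.cast_sub hq]; push_cast; ring
      rw [this]; push_cast; ring
    rw [prod_congr rfl h2, ← fp]
    have h3 : q - (r + 1) = q - r - 1 := by omega
    have h4 : q - r = (q - r - 1) + 1 := by omega
    calc (∏ i ∈ range (r * α), ((α:ℂ) * q + β - i)) * fp α β (((q - r - 1 : ℕ):ℂ) + 1) *
          Γg α β (q - (r+1))
        = (∏ i ∈ range (r * α), ((α:ℂ) * q + β - i)) *
          (Γg α β (q - r - 1) * fp α β (((q - r - 1 : ℕ):ℂ) + 1)) := by rw [h3]; ring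
      _ = (∏ i ∈ range (r * α), ((α:ℂ) * q + β - i)) * Γg α β (q - r) := by
          rw [← Γg_succ α β hβ (q - r - 1), ← h4]
      _ = Γg α β q := ihr q (by omega)

lemma Bnm_eq (hβ : -1 < β.re) (n m : ℕ) (hm : 1 ≤ m) (hmn : m ≤ n) :
    Bnm α β n m * Γg α β (n - m) = Γg α β (n - 1) * Cnm α β n m := by
  have h1 : ((n : ℂ) - 1) = ((n - 1 : ℕ) : ℂ) := by
    rw [Nat.cast_sub (by omega)]; push_cast; ring
  have h2 : (n - 1) - (m - 1) = n - m := by omega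
  rw [Bnm, h1, mul_comm _ (Cnm α β n m), mul_assoc, ← h2,
    prod_telescope α β hβ (m - 1) (n - 1) (by omega)]
  ring

end B

/-! ### Combinatorial lemmas -/

lemma choose3 (N m j : ℕ) (hjm : j ≤ m) (hmN : m ≤ N) :
    N.choose m * m.choose j = N.choose j * (N - j).choose (m - j) := by
  have key : N.choose m * m.choose j * (j.factorial * (m - j).factorial * (N - m).factorial)
      = N.choose j * (N - j).choose (m - j) *
        (j.factorial * (m - j).factorial * (N - m).factorial) := by
    have h1 : m.choose j * j.factorial * (m - j).factorial = m.factorial :=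
      Nat.choose_mul_factorial_mul_factorial hjm
    have h2 : N.choose m * m.factorial * (N - m).factorial = N.factorial :=
      Nat.choose_mul_factorial_mul_factorial hmN
    have h3 : (N - j).choose (m - j) * (m - j).factorial * ((N - j) - (m - j)).factorial
        = (N - j).factorial := Nat.choose_mul_factorial_mul_factorial (by omega)
    have h4 : N.choose j * j.factorial * (N - j).factorial = N.factorial :=
      Nat.choose_mul_factorial_mul_factorial (hjm.trans hmN)
    have h5 : (N - j) - (m - j) = N - m := by omega
    rw [h5] at h3
    calc N.choose m * m.choose j * (j.factorial * (m - j).factorial * (N - m).factorial)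
        = N.choose m * (m.choose j * j.factorial * (m - j).factorial) * (N - m).factorial := by
          ring
      _ = N.factorial := by rw [h1, h2]
      _ = N.choose j * j.factorial * (N - j).factorial := h4.symm
      _ = N.choose j * j.factorial *
            ((N - j).choose (m - j) * (m - j).factorial * (N - m).factorial) := by rw [h3]
      _ = N.choose j * (N - j).choose (m - j) *
            (j.factorial * (m - j).factorial * (N - m).factorial) := by ring
  exact Nat.eq_of_mul_eq_mul_right (by positivity) key

lemma alt_sum_choose (d : ℕ) :
    ∑ t ∈ range (d + 1), (-1 : ℂ) ^ t * (d.choose t : ℂ) = if d = 0 then 1 else 0 := by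
  have h := Int.alternating_sum_range_choose (n := d)
  calc ∑ t ∈ range (d + 1), (-1:ℂ)^t * (d.choose t : ℂ)
      = ((∑ t ∈ range (d + 1), (-1:ℤ)^t * (d.choose t : ℤ) : ℤ) : ℂ) := by push_cast; rfl
    _ = _ := by rw [h]; split_ifs <;> simp

lemma lemK (N : ℕ) (h : ℕ → ℂ) :
    ∑ m ∈ range (N + 1), (-1 : ℂ) ^ (m + 1) * (N.choose m : ℂ) *
      ∑ j ∈ range (m + 1), (-1 : ℂ) ^ j * (m.choose j : ℂ) * h j = -h N := by
  have step1 : ∀ m ∈ range (N + 1),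
      (-1 : ℂ) ^ (m + 1) * (N.choose m : ℂ) *
        ∑ j ∈ range (m + 1), (-1 : ℂ) ^ j * (m.choose j : ℂ) * h j
      = ∑ j ∈ range (N + 1), (-1 : ℂ) ^ (m + 1) * (N.choose m : ℂ) *
          ((-1 : ℂ) ^ j * (m.choose j : ℂ) * h j) := by
    intro m hm
    rw [mem_range] at hm
    rw [mul_sum]
    refine Finset.sum_subset (by intro x hx; rw [mem_range] at hx ⊢; omega) ?_
    intro j hj hj2
    rw [mem_range] at hj hj2
    have : m.choose j = 0 := Nat.choose_eq_zero_of_lt (by omega)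
    simp [this]
  rw [sum_congr rfl step1, Finset.sum_comm]
  have inner : ∀ j ∈ range (N + 1),
      ∑ m ∈ range (N + 1), (-1 : ℂ) ^ (m + 1) * (N.choose m : ℂ) *
        ((-1 : ℂ) ^ j * (m.choose j : ℂ) * h j)
      = (if j = N then (-1 : ℂ) ^ (N + 1) * ((-1 : ℂ) ^ N * h N) else 0) := by
    intro j hj
    rw [mem_range, Nat.lt_succ_iff] at hj
    have trim : ∑ m ∈ range (N + 1), (-1 : ℂ) ^ (m + 1) * (N.choose m : ℂ) *
        ((-1 : ℂ) ^ j * (m.choose j : ℂ) * h j)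
        = ∑ m ∈ Ico j (N + 1), (-1 : ℂ) ^ (m + 1) * (N.choose m : ℂ) *
          ((-1 : ℂ) ^ j * (m.choose j : ℂ) * h j) := by
      refine (Finset.sum_subset ?_ ?_).symm
      · intro x hx; rw [mem_Ico] at hx; rw [mem_range]; omega
      · intro m hm1 hm2
        rw [mem_range] at hm1; rw [mem_Ico] at hm2
        have : m.choose j = 0 := Nat.choose_eq_zero_of_lt (by omega)
        simp [this]
    rw [trim, Finset.sum_Ico_eq_sum_range]
    have hNj : N + 1 - j = (N - j) + 1 := by omega
    rw [hNj]
    have reidx : ∀ t ∈ range ((N - j) + 1),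
        (-1 : ℂ) ^ ((j + t) + 1) * (N.choose (j + t) : ℂ) *
          ((-1 : ℂ) ^ j * ((j + t).choose j : ℂ) * h j)
        = ((-1 : ℂ) ^ (2 * j + 1) * (N.choose j : ℂ) * h j) *
          ((-1 : ℂ) ^ t * ((N - j).choose t : ℂ)) := by
      intro t ht
      rw [mem_range] at ht
      have hc : N.choose (j + t) * (j + t).choose j = N.choose j * (N - j).choose t := by
        have := choose3 N (j + t) j (by omega) (by omega)
        simpa using this
      have hc' : (N.choose (j + t) : ℂ) * ((j + t).choose j : ℂ)
          = (N.choose j : ℂ) * ((N - j).choose t : ℂ) := by exact_mod_cast hc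
      calc (-1 : ℂ) ^ ((j + t) + 1) * (N.choose (j + t) : ℂ) *
            ((-1 : ℂ) ^ j * ((j + t).choose j : ℂ) * h j)
          = ((-1:ℂ)^(2*j+1) * (-1:ℂ)^t) * ((N.choose (j + t) : ℂ) * ((j + t).choose j : ℂ))
            * h j := by ring
        _ = ((-1:ℂ)^(2*j+1) * (-1:ℂ)^t) * ((N.choose j : ℂ) * ((N - j).choose t : ℂ)) * h j :=
            by rw [hc']
        _ = ((-1 : ℂ) ^ (2 * j + 1) * (N.choose j : ℂ) * h j) *
            ((-1 : ℂ) ^ t * ((N - j).choose t : ℂ)) := by ring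
    rw [sum_congr rfl reidx, ← mul_sum, alt_sum_choose]
    rcases eq_or_lt_of_le hj with h1 | h1
    · rw [if_pos h1, if_pos (by omega)]
      subst h1
      have hp : ((-1:ℂ))^(2*j+1) = (-1:ℂ)^(j+1) * (-1:ℂ)^j := by
        rw [← pow_add]; congr 1; ring
      rw [Nat.choose_self, Nat.cast_one, hp]
      ring
    · rw [if_neg (by omega), if_neg (by omega), mul_zero]
  rw [sum_congr rfl inner, Finset.sum_ite_eq' (range (N + 1)) N]
  rw [if_pos (by rw [mem_range]; omega)]
  have hq : ((-1:ℂ))^(N+1) = (-1) * (-1:ℂ)^N := by rw [pow_add]; ring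
  rw [hq]
  have hsq : ((-1:ℂ))^N * (-1:ℂ)^N = 1 := by
    rw [← pow_add]
    have : (-1:ℂ)^(N+N) = ((-1:ℂ)^2)^N := by rw [← pow_mul]; ring_nf
    rw [this]; norm_num
  calc -1 * (-1:ℂ)^N * ((-1:ℂ)^N * h N) = -(((-1:ℂ)^N * (-1:ℂ)^N) * h N) := by ring
    _ = -h N := by rw [hsq, one_mul]

/-! ### Coefficient form of genLaguerre -/

section C
variable (α : ℕ) (β : ℂ)

lemma desc_fact (p : ℕ) : ∀ k, k ≤ p →
    ((p - k).factorial : ℂ) * ∏ i ∈ range k, ((p : ℂ) - i) = (p.factorial : ℂ) := by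
  intro k
  induction k with
  | zero => intro _; simp
  | succ k ihk =>
    intro hk
    rw [prod_range_succ]
    have h1 : ((p - k : ℕ) : ℂ) = (p : ℂ) - k := by
      rw [Nat.cast_sub (by omega)]
    have h2 : (p - k).factorial = (p - (k+1)).factorial * (p - k) := by
      have h3 : p - k = (p - (k+1)) + 1 := by omega
      rw [h3, Nat.factorial_succ]; ring
    calc ((p - (k+1)).factorial : ℂ) * (( ∏ i ∈ range k, ((p:ℂ) - i)) * ((p:ℂ) - k))
        = (((p - (k+1)).factorial : ℂ) * ((p - k : ℕ):ℂ)) * ∏ i ∈ range k, ((p:ℂ) - i) := by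
          rw [h1]; ring
      _ = ((p - k).factorial : ℂ) * ∏ i ∈ range k, ((p:ℂ) - i) := by
          rw [h2]; push_cast; ring
      _ = (p.factorial : ℂ) := ihk (by omega)

lemma genLaguerre_eq (hβ : -1 < β.re) (p : ℕ) (z : ℂ) :
    genLaguerre α β p z = ∑ k ∈ range (p + 1), cc α β p k * z ^ k := by
  rw [genLaguerre, mul_sum]
  refine sum_congr rfl fun k hk => ?_
  rw [mem_range, Nat.lt_succ_iff] at hk
  have e1 : ∏ i ∈ range k, (-(p : ℂ) + i) = (-1) ^ k * ∏ i ∈ range k, ((p : ℂ) - i) := by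
    calc ∏ i ∈ range k, (-(p:ℂ) + i) = ∏ i ∈ range k, (-1) * ((p:ℂ) - i) :=
          prod_congr rfl fun i _ => by ring
      _ = (∏ _i ∈ range k, (-1:ℂ)) * ∏ i ∈ range k, ((p:ℂ) - i) := prod_mul_distrib
      _ = (-1)^k * ∏ i ∈ range k, ((p:ℂ) - i) := by rw [prod_const, card_range]
  have e2 : ((p - k).factorial : ℂ) * ∏ i ∈ range k, ((p : ℂ) - i) = (p.factorial : ℂ) :=
    desc_fact p k hk
  have hfp := fact_ne p
  have hfk := fact_ne k
  have hfpk := fact_ne (p - k)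
  have hΓk : Complex.Gamma ((α : ℂ) * k + β + 1) ≠ 0 := Γg_ne_zero α β hβ k
  have hΓp := Γg_ne_zero α β hβ p
  rw [cc, Γg, Γg, e1]
  have e3 : ∏ i ∈ range k, ((p : ℂ) - i) = (p.factorial : ℂ) / ((p - k).factorial : ℂ) := by
    rw [eq_div_iff hfpk, ← e2]; ring
  rw [e3]
  field_simp

end C

/-! ### The key coefficient identity -/

lemma keyk (α : ℕ) (β : ℂ) (hβ : -1 < β.re) (n k : ℕ) (hn : 1 ≤ n) (hk : k ≤ n) :
    cc α β n k = (∑ i ∈ range (n - k), (-1:ℂ)^i * Bnm α β n (i+1) * cc α β (n-1-i) k)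
      - (if 1 ≤ k then (1/(n:ℂ)) * cc α β (n-1) (k-1) else 0) := by
  have hnz : (n : ℂ) ≠ 0 := Nat.cast_ne_zero.mpr (by omega)
  set hh : ℕ → ℂ := fun j => ((n:ℂ) - j) * ∏ t ∈ range α, ((α:ℂ)*((n:ℂ)-j)+β-t) with hhh
  set D : ℂ := (-1:ℂ)^k * Γg α β (n-1) /
      ((k.factorial:ℂ) * Γg α β k * (((n-k).factorial:ℂ)) * n) with hD
  set F : ℕ → ℂ := fun m => (-1:ℂ)^(m+1) * ((n-k).choose m : ℂ) *
      ∑ j ∈ range (m+1), (-1:ℂ)^j * ((m.choose j):ℂ) * hh j with hF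
  have hΓk := Γg_ne_zero α β hβ k
  have hΓn1 := Γg_ne_zero α β hβ (n-1)
  have step1 : ∀ i ∈ range (n - k),
      (-1:ℂ)^i * Bnm α β n (i+1) * cc α β (n-1-i) k = D * F (i+1) := by
    intro i hi
    rw [mem_range] at hi
    have hΓni := Γg_ne_zero α β hβ (n-1-i)
    have hB : Bnm α β n (i+1) = Γg α β (n-1) * Cnm α β n (i+1) / Γg α β (n-1-i) := by
      rw [eq_div_iff hΓni]
      have h0 : n - (i+1) = n - 1 - i := by omega
      rw [← h0]
      exact Bnm_eq α β hβ n (i+1) (by omega) (by omega)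
    have hC : Cnm α β n (i+1) = 1/((((i+1).factorial:ℕ):ℂ) * n) *
        ∑ j ∈ range (i+1+1), (-1:ℂ)^j * (((i+1).choose j):ℂ) * hh j := by
      rw [Cnm]
      refine congrArg _ (sum_congr rfl fun j _ => ?_)
      simp only [hhh]
      ring
    have hcf : (((n-k).factorial : ℕ):ℂ) = (((n-k).choose (i+1) : ℕ):ℂ) *
        (((i+1).factorial : ℕ):ℂ) * ((((n-k)-(i+1)).factorial : ℕ):ℂ) := by
      exact_mod_cast (Nat.choose_mul_factorial_mul_factorial (by omega : i+1 ≤ n-k)).symm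
    have hff : (n-1-i-k).factorial = ((n-k)-(i+1)).factorial := by
      congr 1; omega
    have hchz : (((n-k).choose (i+1) : ℕ):ℂ) ≠ 0 :=
      Nat.cast_ne_zero.mpr (Nat.choose_pos (by omega : i+1 ≤ n-k)).ne'
    rw [hB, hC, cc, hff, hD, hF]
    have hfk := fact_ne k
    have hfi := fact_ne (i+1)
    have hfnki := fact_ne ((n-k)-(i+1))
    rw [hcf]
    field_simp
    ring
  have hsum : ∑ i ∈ range (n - k), (-1:ℂ)^i * Bnm α β n (i+1) * cc α β (n-1-i) k
      = D * (hh 0 - hh (n-k)) := by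
    rw [sum_congr rfl step1, ← mul_sum]
    congr 1
    have hK : ∑ m ∈ range ((n-k) + 1), F m = -hh (n-k) := by
      rw [hF]; exact lemK (n-k) hh
    have hs' : ∑ m ∈ range ((n-k) + 1), F m = ∑ i ∈ range (n-k), F (i+1) + F 0 :=
      Finset.sum_range_succ' F (n-k)
    have hF0 : F 0 = -hh 0 := by simp [hF]
    have hcomb := hs'.symm.trans hK
    rw [hF0] at hcomb
    linear_combination hcomb
  have h0cast : hh 0 = (n:ℂ) * fp α β (n:ℂ) := by simp [hhh, fp]
  have hΓn : Γg α β n = Γg α β (n-1) * fp α β (n:ℂ) := by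
    have h := Γg_succ α β hβ (n-1)
    rw [show (n-1)+1 = n from by omega] at h
    have hc : ((n-1:ℕ):ℂ) + 1 = (n:ℂ) := by
      rw [Nat.cast_sub (by omega)]; ring
    rw [hc] at h
    exact h
  have hfk0 := fact_ne k
  have hfnk0 := fact_ne (n-k)
  have e0 : cc α β n k = D * hh 0 := by
    rw [cc, hD, h0cast, hΓn, div_mul_eq_mul_div,
      div_eq_div_iff (mul_ne_zero (mul_ne_zero hfnk0 hfk0) hΓk)
        (mul_ne_zero (mul_ne_zero (mul_ne_zero hfk0 hΓk) hfnk0) hnz)]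
    ring
  have eN : (if 1 ≤ k then (1/(n:ℂ)) * cc α β (n-1) (k-1) else 0) = -(D * hh (n-k)) := by
    by_cases hk1 : 1 ≤ k
    · rw [if_pos hk1]
      have hcast : ((n-k:ℕ):ℂ) = (n:ℂ) - k := by rw [Nat.cast_sub hk]
      have hhN : hh (n-k) = (k:ℂ) * fp α β (k:ℂ) := by
        show ((n:ℂ) - ((n-k:ℕ):ℂ)) * ∏ t ∈ range α, ((α:ℂ)*((n:ℂ)-((n-k:ℕ):ℂ))+β-t) = _
        rw [hcast, show (n:ℂ) - ((n:ℂ) - (k:ℂ)) = (k:ℂ) from by ring, fp]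
      have hΓkk : Γg α β k = Γg α β (k-1) * fp α β (k:ℂ) := by
        have h := Γg_succ α β hβ (k-1)
        rw [show (k-1)+1 = k from by omega] at h
        have hc : ((k-1:ℕ):ℂ) + 1 = (k:ℂ) := by
          rw [Nat.cast_sub (by omega)]; ring
        rw [hc] at h
        exact h
      have hfpk_ne : fp α β (k:ℂ) ≠ 0 := by
        intro h
        rw [h, mul_zero] at hΓkk
        exact hΓk hΓkk
      have hΓk1 := Γg_ne_zero α β hβ (k-1)
      have hkfact : ((k.factorial : ℕ) : ℂ) = (k:ℂ) * (((k-1).factorial : ℕ) : ℂ) := by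
        exact_mod_cast (Nat.mul_factorial_pred (by omega : k ≠ 0)).symm
      have hnm1 : (n-1)-(k-1) = n-k := by omega
      have hsign : ((-1:ℂ))^k = -(-1:ℂ)^(k-1) := by
        conv_lhs => rw [show k = (k-1)+1 from by omega]
        rw [pow_succ]; ring
      have hf1 := fact_ne (k-1)
      have hfnk := fact_ne (n-k)
      have hknz : (k:ℂ) ≠ 0 := Nat.cast_ne_zero.mpr (by omega)
      rw [cc, hD, hhN, hΓkk, hnm1, hkfact, hsign, div_mul_div_comm, div_mul_eq_mul_div,
        ← neg_div, div_eq_div_iff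
          (mul_ne_zero hnz (mul_ne_zero (mul_ne_zero hfnk hf1) hΓk1))
          (mul_ne_zero (mul_ne_zero (mul_ne_zero (mul_ne_zero hknz hf1)
            (mul_ne_zero hΓk1 hfpk_ne)) hfnk) hnz)]
      ring
    · rw [if_neg hk1]
      have hk0 : k = 0 := by omega
      subst hk0
      have hz : hh (n-0) = 0 := by
        show ((n:ℂ) - ((n-0:ℕ):ℂ)) * _ = 0
        simp
      rw [hz, mul_zero, neg_zero]
  rw [hsum, eN, e0]
  ring


/-! ### The recurrence for genLaguerre -/

noncomputable def gg (α : ℕ) (β z : ℂ) (n d : ℕ) : ℂ :=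
  if d = 0 then Bnm α β n 1 - z / (n : ℂ) else Bnm α β n (d + 1)

lemma lag_rec (α : ℕ) (β : ℂ) (hβ : -1 < β.re) (z : ℂ) (m : ℕ) :
    genLaguerre α β (m + 1) z
      = ∑ i ∈ range (m + 1), (-1 : ℂ) ^ i * gg α β z (m + 1) i * genLaguerre α β (m - i) z := by
  have hsplit : ∀ i ∈ range (m + 1),
      (-1:ℂ)^i * gg α β z (m+1) i * genLaguerre α β (m-i) z
      = (-1:ℂ)^i * Bnm α β (m+1) (i+1) * genLaguerre α β (m-i) z
        - (if i = 0 then (z / ((m+1:ℕ):ℂ)) * genLaguerre α β m z else 0) := by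
    intro i _
    by_cases h : i = 0
    · subst h
      rw [gg, if_pos rfl, if_pos rfl]
      simp only [pow_zero, one_mul, Nat.sub_zero]
      push_cast
      ring
    · rw [gg, if_neg h, if_neg h, sub_zero]
  rw [sum_congr rfl hsplit, sum_sub_distrib, Finset.sum_ite_eq' (range (m+1)) 0
    (fun _ => (z / ((m+1:ℕ):ℂ)) * genLaguerre α β m z), if_pos (by rw [mem_range]; omega)]
  -- coefficient expansion
  rw [genLaguerre_eq α β hβ (m+1) z, genLaguerre_eq α β hβ m z]
  have T1 : ∀ i ∈ range (m + 1),
      (-1:ℂ)^i * Bnm α β (m+1) (i+1) * genLaguerre α β (m-i) z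
      = ∑ k ∈ range (m+2),
          (if k ≤ m - i then (-1:ℂ)^i * Bnm α β (m+1) (i+1) * cc α β (m-i) k else 0) * z^k := by
    intro i hi
    rw [mem_range] at hi
    rw [genLaguerre_eq α β hβ (m-i) z, mul_sum]
    rw [show (∑ k ∈ range (m-i+1), (-1:ℂ)^i * Bnm α β (m+1) (i+1) * (cc α β (m-i) k * z^k))
        = ∑ k ∈ range (m-i+1),
            (if k ≤ m - i then (-1:ℂ)^i * Bnm α β (m+1) (i+1) * cc α β (m-i) k else 0) * z^k
      from sum_congr rfl fun k hk => by
        rw [mem_range] at hk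
        rw [if_pos (by omega)]; ring]
    refine Finset.sum_subset (by intro x hx; rw [mem_range] at hx ⊢; omega) ?_
    intro k hk1 hk2
    rw [mem_range] at hk1 hk2
    rw [if_neg (by omega), zero_mul]
  rw [sum_congr rfl T1, Finset.sum_comm]
  have T2 : (z / ((m+1:ℕ):ℂ)) * ∑ k ∈ range (m+1), cc α β m k * z^k
      = ∑ k ∈ range (m+2), (if 1 ≤ k then (1/((m+1:ℕ):ℂ)) * cc α β m (k-1) else 0) * z^k := by
    rw [show (m+2) = (m+1)+1 from rfl,
      Finset.sum_range_succ' (fun k => (if 1 ≤ k then (1/((m+1:ℕ):ℂ)) * cc α β m (k-1) else 0) * z^k) (m+1)]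
    simp only [Nat.le_add_left 1, if_pos, Nat.add_sub_cancel, if_neg (by omega : ¬ 1 ≤ 0),
      zero_mul, add_zero]
    rw [mul_sum]
    refine sum_congr rfl fun k hk => ?_
    ring
  rw [T2, ← sum_sub_distrib]
  refine sum_congr rfl fun k hk => ?_
  rw [mem_range] at hk
  rw [← sum_mul, ← sub_mul]
  congr 1
  have trim : ∑ i ∈ range (m+1),
      (if k ≤ m - i then (-1:ℂ)^i * Bnm α β (m+1) (i+1) * cc α β (m-i) k else 0)
      = ∑ i ∈ range (m+1-k), (-1:ℂ)^i * Bnm α β (m+1) (i+1) * cc α β (m-i) k := by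
    rw [← Finset.sum_subset (s₁ := range (m+1-k))
      (by intro x hx; rw [mem_range] at hx ⊢; omega) ?_]
    · refine sum_congr rfl fun i hi => ?_
      rw [mem_range] at hi
      rw [if_pos (by omega)]
    · intro i hi1 hi2
      rw [mem_range] at hi1 hi2
      rw [if_neg (by omega)]
  rw [trim]
  have hkey := keyk α β hβ (m+1) k (by omega) (by omega)
  simp only [Nat.add_sub_cancel] at hkey
  rw [← hkey]


/-! ### Main theorem -/

/-- Hessenberg determinant expression of `L_n^{(α,β)}(z)`.  The matrix is indexed by
`Fin n`; row/column `i, j : Fin n` correspond to the 1-indexed `(i+1, j+1)` entries. -/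
theorem genLaguerre_det (α : ℕ) (hα : 0 < α) (β : ℂ) (hβ : -1 < β.re) (z : ℂ)
    (n : ℕ) (hn : 1 ≤ n) :
    genLaguerre α β n z =
      Matrix.det (Matrix.of fun i j : Fin n =>
        if (j : ℕ) = (i : ℕ) + 1 then (1 : ℂ)
        else if (i : ℕ) + 1 < (j : ℕ) then 0
        else if (i : ℕ) = (j : ℕ) then
          Bnm α β (n - (i : ℕ)) 1 - z / ((n : ℂ) - (i : ℕ))
        else Bnm α β (n - (j : ℕ)) ((i : ℕ) - (j : ℕ) + 1)) := by
  have hL0 : genLaguerre α β 0 z = 1 := by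
    have hΓ : Complex.Gamma ((α : ℂ) * (0:ℕ) + β + 1) ≠ 0 := Γg_ne_zero α β hβ 0
    rw [genLaguerre]
    simp only [range_one, sum_singleton, pow_zero, range_zero, prod_empty, Nat.factorial_zero,
      Nat.cast_one, Nat.cast_zero]
    have hΓ' : Complex.Gamma (β + 1) ≠ 0 := by simpa using hΓ
    rw [zero_add, sum_range_one]
    simp only [range_zero, prod_empty, pow_zero, Nat.factorial_zero, Nat.cast_one, Nat.cast_zero,
      mul_zero, zero_add, mul_one, one_mul]
    field_simp
  have hdet := hessM_det_eq (gg α β z) (fun p => genLaguerre α β p z) hL0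
    (fun m => lag_rec α β hβ z m) n
  rw [← hdet]
  congr 1
  ext i j
  have hiv := i.isLt
  have hjv := j.isLt
  simp only [hessM, gg, Matrix.of_apply]
  split_ifs with hc1 hc2 hc3 hc4 <;> try rfl
  all_goals try omega
  have h1 : n - (j:ℕ) = n - (i:ℕ) := by omega
  rw [h1, Nat.cast_sub (by omega : (i:ℕ) ≤ n), hc4]
end

section
/- Let n ≥ 1 be an integer and let (a_j^{(ℓ)})_{j ≥ 0, ℓ ≥ 1} be an arbitrary family of complex numbers. Define the n×n lower-Hessenberg matrix H by: H_{i,j} = a_{j−1}^{(i−j+1)} for 1 ≤ j ≤ i ≤ n; H_{i,i+1} = 1 for 1 ≤ i ≤ n−1; and H_{i,j} = 0 for j > i+1. Then det H = Σ_{k=1}^{n} (−1)^{n−k} Σ_{t_1+⋯+t_k=n, t_1,…,t_k ≥ 1} a_0^{(t_1)} · a_{t_1}^{(t_2)} · a_{t_1+t_2}^{(t_3)} ⋯ a_{t_1+⋯+t_{k−1}}^{(t_k)}, where the inner sum runs over all compositions (t_1,…,t_k) of n into k positive integer parts. -/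
open Finset

/-- The Hessenberg matrix. -/
def Hm (n : ℕ) (a : ℕ → ℕ → ℂ) : Matrix (Fin n) (Fin n) ℂ :=
  Matrix.of fun i j : Fin n =>
    if (j : ℕ) = (i : ℕ) + 1 then (1 : ℂ)
    else if (i : ℕ) + 1 < (j : ℕ) then 0
    else a (j : ℕ) ((i : ℕ) - (j : ℕ) + 1)

/-- Recursive expansion of the determinant along the first column. -/
noncomputable def S : ℕ → (ℕ → ℕ → ℂ) → ℂ
  | 0, _ => 1
  | (n+1), a => ∑ i ∈ range (n+1),
      (-1:ℂ)^i * a 0 (i+1) * S (n - i) (fun j ℓ => a (j+i+1) ℓ)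
  termination_by n _ => n
  decreasing_by omega

lemma S_zero (a : ℕ → ℕ → ℂ) : S 0 a = 1 := by rw [S]

lemma S_succ (n : ℕ) (a : ℕ → ℕ → ℂ) :
    S (n+1) a = ∑ i ∈ range (n+1),
      (-1:ℂ)^i * a 0 (i+1) * S (n - i) (fun j ℓ => a (j+i+1) ℓ) := by rw [S]

lemma det_eq_minor {n : ℕ} (M : Matrix (Fin (n+1)) (Fin (n+1)) ℂ)
    (h0 : M 0 0 = 1) (h1 : ∀ j : Fin n, M 0 j.succ = 0) :
    M.det = (M.submatrix Fin.succ Fin.succ).det := by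
  rw [Matrix.det_succ_row_zero, Fin.sum_univ_succ]
  simp [h0, h1, Fin.succAbove_zero]

lemma Hm_sub {n : ℕ} (a : ℕ → ℕ → ℂ) :
    (Hm (n+1) a).submatrix Fin.succ Fin.succ = Hm n (fun j ℓ => a (j+1) ℓ) := by
  ext r c
  simp only [Hm, Matrix.submatrix_apply, Matrix.of_apply, Fin.val_succ]
  split_ifs <;> first | rfl | omega | (congr 1 <;> omega)

lemma Hm_minor_succ {n : ℕ} (a : ℕ → ℕ → ℂ) (i : Fin (n+1)) :
    ((Hm (n+2) a).submatrix (Fin.succAbove i.succ) Fin.succ).submatrix Fin.succ Fin.succ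
      = (Hm (n+1) (fun j ℓ => a (j+1) ℓ)).submatrix (Fin.succAbove i) Fin.succ := by
  ext r c
  simp only [Hm, Matrix.submatrix_apply, Matrix.of_apply, Fin.succ_succAbove_succ,
    Fin.val_succ]
  split_ifs <;> first | rfl | omega | (congr 1 <;> omega)

lemma Hm_minor_det : ∀ (n : ℕ) (a : ℕ → ℕ → ℂ) (i : Fin (n+1)),
    ((Hm (n+1) a).submatrix i.succAbove Fin.succ).det
      = (Hm (n - (i:ℕ)) (fun j ℓ => a (j + (i:ℕ) + 1) ℓ)).det := by
  intro n
  induction n with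
  | zero =>
      intro a i
      have hi : (i:ℕ) = 0 := by omega
      rw [hi]
      rw [Matrix.det_fin_zero, Matrix.det_fin_zero]
  | succ m ih =>
      intro a i
      induction i using Fin.cases with
      | zero =>
          rw [Fin.succAbove_zero, Hm_sub]
          simp
      | succ i' =>
          have h0 : ((Hm (m+2) a).submatrix (Fin.succAbove i'.succ) Fin.succ) 0 0 = 1 := by
            simp [Hm, Matrix.submatrix_apply]
          have h1 : ∀ j : Fin m,
              ((Hm (m+2) a).submatrix (Fin.succAbove i'.succ) Fin.succ) 0 j.succ = 0 := by
            intro j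
            simp only [Matrix.submatrix_apply, Fin.succ_succAbove_zero, Hm,
              Matrix.of_apply, Fin.val_succ, Fin.val_zero]
            split_ifs <;> first | rfl | omega
          rw [det_eq_minor _ h0 h1, Hm_minor_succ, ih]
          simp only [Fin.val_succ, ← add_assoc]
          have hs : m + 1 - ((i' : ℕ) + 1) = m - (i' : ℕ) := by omega
          rw [hs]

lemma detH : ∀ n : ℕ, ∀ a : ℕ → ℕ → ℂ, (Hm n a).det = S n a := by
  intro n
  induction n using Nat.strong_induction_on with
  | _ n ih =>
    match n with
    | 0 => intro a; rw [Matrix.det_fin_zero, S_zero]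
    | (m+1) =>
      intro a
      rw [Matrix.det_succ_column_zero]
      have key : ∀ i : Fin (m+1),
          (-1:ℂ)^(i:ℕ) * (Hm (m+1) a) i 0 * ((Hm (m+1) a).submatrix i.succAbove Fin.succ).det
            = (-1:ℂ)^(i:ℕ) * a 0 ((i:ℕ)+1) * S (m - (i:ℕ)) (fun j ℓ => a (j+(i:ℕ)+1) ℓ) := by
        intro i
        have hent : (Hm (m+1) a) i 0 = a 0 ((i:ℕ)+1) := by
          simp only [Hm, Matrix.of_apply, Fin.val_zero]
          split_ifs <;> simp_all
        rw [hent, Hm_minor_det, ih (m - (i:ℕ)) (by omega)]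
      rw [Finset.sum_congr rfl (fun i _ => key i)]
      rw [Fin.sum_univ_eq_sum_range
        (fun i => (-1:ℂ)^i * a 0 (i+1) * S (m - i) (fun j ℓ => a (j+i+1) ℓ))]
      rw [S_succ]

/-- The composition-sum side, extended to `k = 0`. -/
noncomputable def R (n : ℕ) (a : ℕ → ℕ → ℂ) : ℂ :=
  ∑ k ∈ range (n+1), (-1:ℂ)^(n-k) *
    ∑ t ∈ (Finset.Nat.antidiagonalTuple k n).filter (fun t => ∀ i, 1 ≤ t i),
      ∏ i : Fin k, a (∑ j ∈ univ.filter (fun j => j < i), t j) (t i)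

lemma R_zero (a : ℕ → ℕ → ℂ) : R 0 a = 1 := by
  simp [R]

lemma adt_filter_empty {k m : ℕ} (h : m < k) :
    (Finset.Nat.antidiagonalTuple k m).filter (fun t => ∀ i, 1 ≤ t i) = ∅ := by
  rw [Finset.eq_empty_iff_forall_notMem]
  intro t ht
  rw [Finset.mem_filter, Finset.Nat.mem_antidiagonalTuple] at ht
  obtain ⟨hsum, hpos⟩ := ht
  have : (k : ℕ) ≤ ∑ i : Fin k, t i := by
    calc (k:ℕ) = ∑ _i : Fin k, 1 := by simp
    _ ≤ ∑ i : Fin k, t i := Finset.sum_le_sum (fun i _ => hpos i)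
  omega

lemma filter_lt_sum_cons {k : ℕ} (x : ℕ) (s : Fin k → ℕ) (i : Fin k) :
    ∑ j ∈ univ.filter (fun j => j < i.succ), (Fin.cons x s : Fin (k+1) → ℕ) j
      = x + ∑ j ∈ univ.filter (fun j => j < i), s j := by
  rw [Finset.sum_filter, Finset.sum_filter, Fin.sum_univ_succ]
  simp [Fin.succ_lt_succ_iff, Fin.succ_pos]

lemma prod_cons {k : ℕ} (a : ℕ → ℕ → ℂ) (x : ℕ) (s : Fin k → ℕ) :
    (∏ i : Fin (k+1), a (∑ j ∈ univ.filter (fun j => j < i), (Fin.cons x s : Fin (k+1) → ℕ) j)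
        ((Fin.cons x s : Fin (k+1) → ℕ) i))
      = a 0 x * ∏ i : Fin k, a (x + ∑ j ∈ univ.filter (fun j => j < i), s j) (s i) := by
  rw [Fin.prod_univ_succ]
  congr 1
  · congr 1
    rw [Finset.sum_eq_zero]
    intro j hj
    rw [Finset.mem_filter] at hj
    exact absurd hj.2 (Fin.not_lt_zero j)
  · refine Finset.prod_congr rfl fun i _ => ?_
    rw [filter_lt_sum_cons, Fin.cons_succ]

lemma comp_split (k n : ℕ) (f : (Fin (k+1) → ℕ) → ℂ) :
    ∑ t ∈ (Finset.Nat.antidiagonalTuple (k+1) (n+1)).filter (fun t => ∀ i, 1 ≤ t i), f t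
      = ∑ i ∈ range (n+1),
          ∑ s ∈ (Finset.Nat.antidiagonalTuple k (n-i)).filter (fun s => ∀ i, 1 ≤ s i),
            f (Fin.cons (i+1) s) := by
  rw [Finset.sum_sigma']
  refine Finset.sum_nbij' (fun t => (⟨t 0 - 1, Fin.tail t⟩ : Σ _i : ℕ, Fin k → ℕ))
    (fun p => Fin.cons (p.1+1) p.2) ?_ ?_ ?_ ?_ ?_
  · intro t ht
    rw [Finset.mem_filter, Finset.Nat.mem_antidiagonalTuple] at ht
    obtain ⟨hsum, hpos⟩ := ht
    rw [Fin.sum_univ_succ] at hsum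
    have h0 : 1 ≤ t 0 := hpos 0
    rw [Finset.mem_sigma, Finset.mem_range, Finset.mem_filter,
      Finset.Nat.mem_antidiagonalTuple]
    show t 0 - 1 < n + 1 ∧ (∑ i : Fin k, Fin.tail t i = n - (t 0 - 1)) ∧
      ∀ i : Fin k, 1 ≤ Fin.tail t i
    refine ⟨by omega, ?_, fun i => hpos i.succ⟩
    have h2 : ∑ x : Fin k, Fin.tail t x = ∑ x : Fin k, t x.succ := rfl
    rw [h2]
    omega
  · intro p hp
    rw [Finset.mem_sigma, Finset.mem_range, Finset.mem_filter,
      Finset.Nat.mem_antidiagonalTuple] at hp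
    obtain ⟨hi, ⟨hsum, hpos⟩⟩ := hp
    rw [Finset.mem_filter, Finset.Nat.mem_antidiagonalTuple]
    constructor
    · rw [Fin.sum_univ_succ]
      simp only [Fin.cons_zero, Fin.cons_succ]
      omega
    · intro i
      induction i using Fin.cases with
      | zero => simp
      | succ i' => simpa using hpos i'
  · intro t ht
    rw [Finset.mem_filter] at ht
    have h0 : 1 ≤ t 0 := ht.2 0
    have he : t 0 - 1 + 1 = t 0 := by omega
    show Fin.cons (t 0 - 1 + 1) (Fin.tail t) = t
    rw [he, Fin.cons_self_tail]
  · intro p hp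
    exact Sigma.ext (by simp) (by simp)
  · intro t ht
    rw [Finset.mem_filter] at ht
    have h0 : 1 ≤ t 0 := ht.2 0
    have he : t 0 - 1 + 1 = t 0 := by omega
    show f t = f (Fin.cons (t 0 - 1 + 1) (Fin.tail t))
    rw [he, Fin.cons_self_tail]

lemma R_shift (n i : ℕ) (hi : i ≤ n) (a : ℕ → ℕ → ℂ) :
    ∑ k ∈ range (n+1), ((-1:ℂ)^(n-k) * a 0 (i+1) *
      ∑ s ∈ (Finset.Nat.antidiagonalTuple k (n-i)).filter (fun s => ∀ i, 1 ≤ s i),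
        ∏ i' : Fin k, a ((i+1) + ∑ j ∈ univ.filter (fun j => j < i'), s j) (s i'))
    = (-1:ℂ)^i * a 0 (i+1) * R (n-i) (fun j ℓ => a (j+i+1) ℓ) := by
  obtain ⟨m, rfl⟩ : ∃ m, n = m + i := ⟨n - i, by omega⟩
  have hmi : m + i - i = m := by omega
  rw [hmi]
  rw [show m + i + 1 = (m + 1) + i by omega, Finset.sum_range_add]
  have htail : ∀ j ∈ range i,
      ((-1:ℂ)^(m+i-((m+1)+j)) * a 0 (i+1) *
        ∑ s ∈ (Finset.Nat.antidiagonalTuple ((m+1)+j) m).filter (fun s => ∀ i, 1 ≤ s i),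
          ∏ i' : Fin ((m+1)+j), a ((i+1) + ∑ l ∈ univ.filter (fun l => l < i'), s l) (s i'))
      = 0 := by
    intro j _
    rw [adt_filter_empty (by omega)]
    simp
  rw [Finset.sum_congr rfl htail, Finset.sum_const, smul_zero, add_zero]
  rw [R, Finset.mul_sum]
  refine Finset.sum_congr rfl fun k hk => ?_
  rw [Finset.mem_range] at hk
  have hsign : ((-1:ℂ))^(m+i-k) = (-1:ℂ)^i * (-1:ℂ)^(m-k) := by
    rw [← pow_add]
    congr 1
    omega
  have hprod : ∀ s : Fin k → ℕ,
      (∏ i' : Fin k, a ((i+1) + ∑ j ∈ univ.filter (fun j => j < i'), s j) (s i'))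
        = ∏ i' : Fin k, a ((∑ j ∈ univ.filter (fun j => j < i'), s j) + i + 1) (s i') := by
    intro s
    refine Finset.prod_congr rfl fun i' _ => ?_
    congr 1
    omega
  have hsum2 : (∑ s ∈ (Finset.Nat.antidiagonalTuple k m).filter (fun s => ∀ i, 1 ≤ s i),
      ∏ i' : Fin k, a ((i+1) + ∑ j ∈ univ.filter (fun j => j < i'), s j) (s i'))
    = ∑ s ∈ (Finset.Nat.antidiagonalTuple k m).filter (fun s => ∀ i, 1 ≤ s i),
      ∏ i' : Fin k, a ((∑ j ∈ univ.filter (fun j => j < i'), s j) + i + 1) (s i') :=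
    Finset.sum_congr rfl fun s _ => hprod s
  rw [hsum2, hsign]
  ring

lemma R_rec (n : ℕ) (a : ℕ → ℕ → ℂ) :
    R (n+1) a = ∑ i ∈ range (n+1),
      (-1:ℂ)^i * a 0 (i+1) * R (n-i) (fun j ℓ => a (j+i+1) ℓ) := by
  rw [R, Finset.sum_range_succ']
  have h0 : ((-1:ℂ)^(n+1-0) *
      ∑ t ∈ (Finset.Nat.antidiagonalTuple 0 (n+1)).filter (fun t => ∀ i, 1 ≤ t i),
        ∏ i : Fin 0, a (∑ j ∈ univ.filter (fun j => j < i), t j) (t i)) = 0 := by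
    simp
  rw [h0, add_zero]
  have step : ∀ k ∈ range (n+1),
      ((-1:ℂ)^(n+1-(k+1)) *
        ∑ t ∈ (Finset.Nat.antidiagonalTuple (k+1) (n+1)).filter (fun t => ∀ i, 1 ≤ t i),
          ∏ i : Fin (k+1), a (∑ j ∈ univ.filter (fun j => j < i), t j) (t i))
      = ∑ i ∈ range (n+1), ((-1:ℂ)^(n-k) * a 0 (i+1) *
          ∑ s ∈ (Finset.Nat.antidiagonalTuple k (n-i)).filter (fun s => ∀ i, 1 ≤ s i),
            ∏ i' : Fin k, a ((i+1) + ∑ j ∈ univ.filter (fun j => j < i'), s j) (s i')) := by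
    intro k hk
    rw [Finset.mem_range] at hk
    rw [comp_split k n (fun t => ∏ i : Fin (k+1),
      a (∑ j ∈ univ.filter (fun j => j < i), t j) (t i))]
    rw [Finset.mul_sum]
    refine Finset.sum_congr rfl fun i _ => ?_
    rw [Finset.mul_sum, Finset.mul_sum]
    refine Finset.sum_congr rfl fun s _ => ?_
    rw [prod_cons]
    have hn : n + 1 - (k+1) = n - k := by omega
    rw [hn]
    ring
  rw [Finset.sum_congr rfl step, Finset.sum_comm]
  refine Finset.sum_congr rfl fun i hi => ?_
  rw [Finset.mem_range] at hi
  exact R_shift n i (by omega) a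

lemma S_eq_R : ∀ n : ℕ, ∀ a : ℕ → ℕ → ℂ, S n a = R n a := by
  intro n
  induction n using Nat.strong_induction_on with
  | _ n ih =>
    match n with
    | 0 => intro a; rw [R_zero, S_zero]
    | (m+1) =>
      intro a
      rw [S_succ, R_rec]
      refine Finset.sum_congr rfl fun i hi => ?_
      rw [Finset.mem_range] at hi
      rw [ih (m - i) (by omega)]

/-- Expansion of a lower-Hessenberg determinant with unit superdiagonal as a signed
sum over compositions: the matrix indexed by `Fin n` (with `i, j : Fin n`
corresponding to the 1-indexed entries `(i+1, j+1)`) has entries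
`H_{i,j} = a_{j−1}^{(i−j+1)}` for `j ≤ i`, `1` on the superdiagonal and `0` above it;
here `a j ℓ` denotes `a_j^{(ℓ)}`. -/
theorem hessenberg_det_composition_sum (n : ℕ) (hn : 1 ≤ n) (a : ℕ → ℕ → ℂ) :
    Matrix.det (Matrix.of fun i j : Fin n =>
        if (j : ℕ) = (i : ℕ) + 1 then (1 : ℂ)
        else if (i : ℕ) + 1 < (j : ℕ) then 0
        else a (j : ℕ) ((i : ℕ) - (j : ℕ) + 1)) =
      ∑ k ∈ Icc 1 n, (-1 : ℂ) ^ (n - k) *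
        ∑ t ∈ (Finset.Nat.antidiagonalTuple k n).filter (fun t => ∀ i, 1 ≤ t i),
          ∏ i : Fin k, a (∑ j ∈ univ.filter (fun j => j < i), t j) (t i) := by
  obtain ⟨m, rfl⟩ : ∃ m, n = m + 1 := ⟨n - 1, by omega⟩
  have hdet : Matrix.det (Hm (m+1) a) = R (m+1) a := by
    rw [detH, S_eq_R]
  rw [show (Matrix.of fun i j : Fin (m+1) =>
        if (j : ℕ) = (i : ℕ) + 1 then (1 : ℂ)
        else if (i : ℕ) + 1 < (j : ℕ) then 0
        else a (j : ℕ) ((i : ℕ) - (j : ℕ) + 1)) = Hm (m+1) a from rfl, hdet, R]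
  rw [Finset.sum_range_succ']
  have h0 : ((-1:ℂ)^(m+1-0) *
      ∑ t ∈ (Finset.Nat.antidiagonalTuple 0 (m+1)).filter (fun t => ∀ i, 1 ≤ t i),
        ∏ i : Fin 0, a (∑ j ∈ univ.filter (fun j => j < i), t j) (t i)) = 0 := by
    simp
  rw [h0, add_zero]
  rw [show Icc 1 (m+1) = Ico 1 (m+2) from (Finset.Ico_add_one_right_eq_Icc 1 (m+1)).symm,
    Finset.sum_Ico_eq_sum_range]
  refine Finset.sum_congr (by norm_num) fun k _ => ?_
  rw [Nat.add_comm 1 k]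
end

section
/- Let α be a positive integer, β ∈ ℂ with Re(β) > −1, and let n, j be integers with n ≥ 2 and 1 ≤ j ≤ n−1. Then Σ_{m=1}^{n−j} (−1)^{m−1} · C_{n,m}/(n−j−m)! = Γ(αn+β+1)/(Γ(α(n−1)+β+1)·(n−j)!) − j·Γ(αj+β+1)/(n·Γ(α(j−1)+β+1)·(n−j)!). -/
open Finset


open Finset

lemma alt_sum_choose_complex (M : ℕ) :
    ∑ t ∈ range (M + 1), (-1 : ℂ) ^ t * (M.choose t : ℂ) = if M = 0 then 1 else 0 := by
  have h := Int.alternating_sum_range_choose (n := M)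
  have h2 : ((∑ i ∈ range (M + 1), (-1 : ℤ) ^ i * (M.choose i : ℤ) : ℤ) : ℂ)
      = ∑ t ∈ range (M + 1), (-1 : ℂ) ^ t * (M.choose t : ℂ) := by
    push_cast; rfl
  rw [← h2, h]
  split_ifs <;> simp

lemma choose_fact_identity (N k t : ℕ) (hk : k ≤ N) (ht : t ≤ N - k) :
    ((k + t).choose k : ℂ) / (((k + t).factorial : ℂ) * ((N - k - t).factorial : ℂ))
      = ((N - k).choose t : ℂ) / ((k.factorial : ℂ) * ((N - k).factorial : ℂ)) := by
  have hA : (k + t).choose k * k.factorial * t.factorial = (k + t).factorial := by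
    have := Nat.choose_mul_factorial_mul_factorial (show k ≤ k + t by omega)
    simpa [Nat.add_sub_cancel_left] using this
  have hB : (N - k).choose t * t.factorial * (N - k - t).factorial = (N - k).factorial :=
    Nat.choose_mul_factorial_mul_factorial ht
  have key : (k + t).choose k * (k.factorial * (N - k).factorial)
      = (N - k).choose t * ((k + t).factorial * (N - k - t).factorial) := by
    apply Nat.eq_of_mul_eq_mul_right (Nat.factorial_pos t)
    calc (k + t).choose k * (k.factorial * (N - k).factorial) * t.factorial
        = ((k + t).choose k * k.factorial * t.factorial) * (N - k).factorial := by ring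
      _ = (k + t).factorial * (N - k).factorial := by rw [hA]
      _ = ((N - k).choose t * t.factorial * (N - k - t).factorial) * (k + t).factorial := by
          rw [hB]; ring
      _ = (N - k).choose t * ((k + t).factorial * (N - k - t).factorial) * t.factorial := by ring
  rw [div_eq_div_iff (mul_ne_zero (Nat.cast_ne_zero.mpr (Nat.factorial_ne_zero _))
      (Nat.cast_ne_zero.mpr (Nat.factorial_ne_zero _)))
    (mul_ne_zero (Nat.cast_ne_zero.mpr (Nat.factorial_ne_zero _))
      (Nat.cast_ne_zero.mpr (Nat.factorial_ne_zero _)))]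
  exact_mod_cast key

lemma Gamma_step (z : ℂ) (hz : 0 < z.re) (k : ℕ) :
    Complex.Gamma (z + k) = (∏ i ∈ range k, (z + k - 1 - i)) * Complex.Gamma z := by
  induction k with
  | zero => simp
  | succ k ih =>
    have hne : z + k ≠ 0 := by
      intro h
      have : (z + k).re = 0 := by rw [h]; simp
      simp only [Complex.add_re, Complex.natCast_re] at this
      have : (0:ℝ) ≤ (k:ℝ) := by positivity
      linarith [hz, ‹z.re + (k:ℝ) = 0›]
    have h1 : Complex.Gamma (z + (k + 1 : ℕ)) = (z + k) * Complex.Gamma (z + k) := by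
      have := Complex.Gamma_add_one (z + k) hne
      rw [show z + ((k : ℕ) + 1 : ℕ) = z + k + 1 by push_cast; ring, this]
    rw [h1, ih]
    rw [Finset.prod_range_succ']
    have : (∏ i ∈ range k, (z + ((k:ℕ)+1:ℕ) - 1 - ((i + 1 : ℕ) : ℂ)))
        = ∏ i ∈ range k, (z + k - 1 - i) := by
      apply Finset.prod_congr rfl
      intro i _
      push_cast; ring
    push_cast
    push_cast at this
    rw [this]
    ring

lemma sum_lemma (F : ℕ → ℂ) (N : ℕ) (hN : 1 ≤ N) :
    ∑ m ∈ Icc 1 N, (-1 : ℂ) ^ (m - 1)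
        * ((1 : ℂ) / (m.factorial : ℂ) * ∑ k ∈ range (m + 1),
            (-1 : ℂ) ^ k * (m.choose k : ℂ) * F k) / ((N - m).factorial : ℂ)
      = (F 0 - F N) / (N.factorial : ℂ) := by
  set H : ℕ → ℕ → ℂ := fun m k =>
    (-1 : ℂ) ^ (m + k) * (m.choose k : ℂ) * F k
      / ((m.factorial : ℂ) * ((N - m).factorial : ℂ)) with hH
  -- full triangle sum
  have T : ∑ m ∈ range (N + 1), ∑ k ∈ range (m + 1), H m k = F N / (N.factorial : ℂ) := by
    have swap : ∑ m ∈ range (N + 1), ∑ k ∈ range (m + 1), H m k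
        = ∑ k ∈ range (N + 1), ∑ m ∈ Ico k (N + 1), H m k := by
      simp only [Finset.range_eq_Ico]
      exact (Finset.sum_Ico_Ico_comm 0 (N + 1) (fun k m => H m k)).symm
    rw [swap]
    rw [Finset.sum_eq_single N]
    · have : Ico N (N + 1) = {N} := by rw [Finset.Ico_add_one_right_eq_Icc, Finset.Icc_self]
      rw [this, Finset.sum_singleton, hH]
      simp only [Nat.choose_self, Nat.cast_one, Nat.sub_self, Nat.factorial_zero]
      rw [show N + N = 2 * N by ring, pow_mul]
      norm_num
    · intro k hk hkN
      have hkle : k ≤ N := by simp at hk; omega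
      rw [Finset.sum_Ico_eq_sum_range]
      rw [show N + 1 - k = (N - k) + 1 by omega]
      have step : ∀ t ∈ range ((N - k) + 1),
          H (k + t) k = F k / ((k.factorial : ℂ) * ((N - k).factorial : ℂ))
            * ((-1 : ℂ) ^ t * (((N - k).choose t : ℕ) : ℂ)) := by
        intro t ht
        have ht' : t ≤ N - k := by simp at ht; omega
        rw [hH]
        simp only
        have hsign : (-1 : ℂ) ^ (k + t + k) = (-1 : ℂ) ^ t := by
          rw [show k + t + k = 2 * k + t by ring, pow_add, pow_mul]
          norm_num
        have hsub : N - (k + t) = N - k - t := by omega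
        rw [hsign, hsub]
        have hd := choose_fact_identity N k t hkle ht'
        calc (-1 : ℂ) ^ t * ((k + t).choose k : ℂ) * F k
              / (((k + t).factorial : ℂ) * ((N - k - t).factorial : ℂ))
            = (-1 : ℂ) ^ t * F k * (((k + t).choose k : ℂ)
              / (((k + t).factorial : ℂ) * ((N - k - t).factorial : ℂ))) := by ring
          _ = (-1 : ℂ) ^ t * F k * (((N - k).choose t : ℂ)
              / ((k.factorial : ℂ) * ((N - k).factorial : ℂ))) := by rw [hd]
          _ = F k / ((k.factorial : ℂ) * ((N - k).factorial : ℂ))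
              * ((-1 : ℂ) ^ t * (((N - k).choose t : ℕ) : ℂ)) := by ring
      rw [Finset.sum_congr rfl step, ← Finset.mul_sum, alt_sum_choose_complex]
      rw [if_neg (by omega)]
      ring
    · intro h
      exact absurd (Finset.self_mem_range_succ N) h
  -- peel off m = 0
  have peel : ∑ m ∈ range (N + 1), ∑ k ∈ range (m + 1), H m k
      = F 0 / (N.factorial : ℂ) + ∑ m ∈ Icc 1 N, ∑ k ∈ range (m + 1), H m k := by
    have hins : range (N + 1) = insert 0 (Icc 1 N) := by
      ext x
      simp only [Finset.mem_range, Finset.mem_insert, Finset.mem_Icc]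
      omega
    rw [hins, Finset.sum_insert (by simp)]
    congr 1
    simp [hH]
  have key : ∑ m ∈ Icc 1 N, ∑ k ∈ range (m + 1), H m k
      = F N / (N.factorial : ℂ) - F 0 / (N.factorial : ℂ) := by
    rw [← T, peel]; ring
  -- rewrite LHS terms
  have termeq : ∀ m ∈ Icc 1 N,
      (-1 : ℂ) ^ (m - 1)
          * ((1 : ℂ) / (m.factorial : ℂ) * ∑ k ∈ range (m + 1),
              (-1 : ℂ) ^ k * (m.choose k : ℂ) * F k) / ((N - m).factorial : ℂ)
        = -(∑ k ∈ range (m + 1), H m k) := by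
    intro m hm
    have hm1 : 1 ≤ m := (Finset.mem_Icc.mp hm).1
    have hsign : (-1 : ℂ) ^ (m - 1) = -(-1 : ℂ) ^ m := by
      obtain ⟨m', rfl⟩ := Nat.exists_eq_add_of_le hm1
      rw [show 1 + m' - 1 = m' by omega, show 1 + m' = m' + 1 by ring, pow_succ]
      ring
    rw [hsign, Finset.mul_sum, Finset.mul_sum, Finset.sum_div, ← Finset.sum_neg_distrib]
    apply Finset.sum_congr rfl
    intro k hk
    rw [hH]
    simp only
    rw [pow_add]
    ring
  rw [Finset.sum_congr rfl termeq, Finset.sum_neg_distrib, key]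
  ring


/-- Key summation identity for the `C_{n,m}`:
`Σ_{m=1}^{n−j} (−1)^{m−1} C_{n,m}/(n−j−m)!
  = Γ(αn+β+1)/(Γ(α(n−1)+β+1)·(n−j)!) − j·Γ(αj+β+1)/(n·Γ(α(j−1)+β+1)·(n−j)!)`. -/
theorem Cnm_sum_identity (α : ℕ) (hα : 0 < α) (β : ℂ) (hβ : -1 < β.re)
    (n j : ℕ) (hn : 2 ≤ n) (hj1 : 1 ≤ j) (hj2 : j ≤ n - 1) :
    ∑ m ∈ Icc 1 (n - j), (-1 : ℂ) ^ (m - 1) * Cnm α β n m / ((n - j - m).factorial : ℂ) =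
      Complex.Gamma ((α : ℂ) * n + β + 1) /
        (Complex.Gamma ((α : ℂ) * ((n : ℂ) - 1) + β + 1) * ((n - j).factorial : ℂ)) -
      (j : ℂ) * Complex.Gamma ((α : ℂ) * j + β + 1) /
        ((n : ℂ) * Complex.Gamma ((α : ℂ) * ((j : ℂ) - 1) + β + 1) *
          ((n - j).factorial : ℂ)) := by
  set N := n - j with hNdef
  have hjn : j ≤ n := by omega
  have hN1 : 1 ≤ N := by omega
  set F : ℕ → ℂ := fun k =>
    ((n : ℂ) - k) * ∏ i ∈ range α, ((α : ℂ) * ((n : ℂ) - k) + β - i) with hF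
  -- rewrite LHS using sum_lemma
  have hL : ∑ m ∈ Icc 1 N, (-1 : ℂ) ^ (m - 1) * Cnm α β n m / ((N - m).factorial : ℂ)
      = (1 / (n : ℂ)) * ((F 0 - F N) / (N.factorial : ℂ)) := by
    have hre : ∀ m, Cnm α β n m
        = (1 / (n : ℂ)) * ((1 : ℂ) / (m.factorial : ℂ)
            * ∑ k ∈ range (m + 1), (-1 : ℂ) ^ k * (m.choose k : ℂ) * F k) := by
      intro m
      rw [Cnm, Finset.mul_sum, Finset.mul_sum, Finset.mul_sum]
      apply Finset.sum_congr rfl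
      intro k _
      rw [hF]
      simp only
      ring
    calc ∑ m ∈ Icc 1 N, (-1 : ℂ) ^ (m - 1) * Cnm α β n m / ((N - m).factorial : ℂ)
        = ∑ m ∈ Icc 1 N, (1 / (n : ℂ)) * ((-1 : ℂ) ^ (m - 1)
            * ((1 : ℂ) / (m.factorial : ℂ)
              * ∑ k ∈ range (m + 1), (-1 : ℂ) ^ k * (m.choose k : ℂ) * F k)
            / ((N - m).factorial : ℂ)) := by
          apply Finset.sum_congr rfl
          intro m _
          rw [hre m]
          ring
      _ = (1 / (n : ℂ)) * ((F 0 - F N) / (N.factorial : ℂ)) := by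
          rw [← Finset.mul_sum, sum_lemma F N hN1]
  rw [hL]
  -- Gamma identities
  have hβ' : (0:ℝ) < β.re + 1 := by linarith
  have hz1 : ((α : ℂ) * ((n : ℂ) - 1) + β + 1) = ((α * (n - 1) : ℕ) : ℂ) + β + 1 := by
    push_cast [Nat.cast_sub (show 1 ≤ n by omega)]
    ring
  have hz2 : ((α : ℂ) * ((j : ℂ) - 1) + β + 1) = ((α * (j - 1) : ℕ) : ℂ) + β + 1 := by
    push_cast [Nat.cast_sub hj1]
    ring
  have hre1 : (0:ℝ) < ((α : ℂ) * ((n : ℂ) - 1) + β + 1).re := by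
    rw [hz1]
    simp only [Complex.add_re, Complex.natCast_re, Complex.one_re]
    have : (0:ℝ) ≤ ((α * (n - 1) : ℕ) : ℝ) := by positivity
    linarith
  have hre2 : (0:ℝ) < ((α : ℂ) * ((j : ℂ) - 1) + β + 1).re := by
    rw [hz2]
    simp only [Complex.add_re, Complex.natCast_re, Complex.one_re]
    have : (0:ℝ) ≤ ((α * (j - 1) : ℕ) : ℝ) := by positivity
    linarith
  have hG1 : Complex.Gamma ((α : ℂ) * n + β + 1)
      = (∏ i ∈ range α, ((α : ℂ) * ((n : ℂ) - (0:ℕ)) + β - i))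
        * Complex.Gamma ((α : ℂ) * ((n : ℂ) - 1) + β + 1) := by
    have h := Gamma_step ((α : ℂ) * ((n : ℂ) - 1) + β + 1) hre1 α
    rw [show ((α : ℂ) * ((n : ℂ) - 1) + β + 1 + (α : ℕ)) = (α : ℂ) * n + β + 1 by
      push_cast; ring] at h
    rw [h]
    congr 1
    apply Finset.prod_congr rfl
    intro i _
    push_cast
    ring
  have hG2 : Complex.Gamma ((α : ℂ) * j + β + 1)
      = (∏ i ∈ range α, ((α : ℂ) * ((n : ℂ) - (N:ℕ)) + β - i))
        * Complex.Gamma ((α : ℂ) * ((j : ℂ) - 1) + β + 1) := by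
    have h := Gamma_step ((α : ℂ) * ((j : ℂ) - 1) + β + 1) hre2 α
    rw [show ((α : ℂ) * ((j : ℂ) - 1) + β + 1 + (α : ℕ)) = (α : ℂ) * j + β + 1 by
      push_cast; ring] at h
    rw [h]
    congr 1
    apply Finset.prod_congr rfl
    intro i _
    have hNj : ((N : ℕ) : ℂ) = (n : ℂ) - j := by
      rw [hNdef]
      push_cast [Nat.cast_sub hjn]
      ring
    rw [hNj]
    push_cast
    ring
  have hNj : ((N : ℕ) : ℂ) = (n : ℂ) - j := by
    rw [hNdef]
    push_cast [Nat.cast_sub hjn]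
    ring
  have hF0 : F 0 = (n : ℂ) * ∏ i ∈ range α, ((α : ℂ) * ((n : ℂ) - (0:ℕ)) + β - i) := by
    rw [hF]; simp
  have hFN : F N = (j : ℂ) * ∏ i ∈ range α, ((α : ℂ) * ((n : ℂ) - (N:ℕ)) + β - i) := by
    rw [hF]
    simp only
    congr 1
    rw [hNj]
    ring
  rw [hG1, hG2, hF0, hFN]
  have hΓ1 := Complex.Gamma_ne_zero_of_re_pos hre1
  have hΓ2 := Complex.Gamma_ne_zero_of_re_pos hre2
  have hn0 : (n : ℂ) ≠ 0 := Nat.cast_ne_zero.mpr (by omega)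
  have hNf : ((N.factorial : ℕ) : ℂ) ≠ 0 := Nat.cast_ne_zero.mpr (Nat.factorial_ne_zero _)
  field_simp
end
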